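/- arXiv:1212.3940 — 8 statements merged into one kernel-verified Lean document; each statement's English description precedes it below -/
import Mathlib

section
/- Let G be a simple connected vertex-transitive graph of odd order n with vertex degree k ≥ 4. Then the independence number of G satisfies α(G) < (n − 1)/2. -/
open SimpleGraph

namespace IndepAux

variable {V : Type*} [Fintype V] {G : SimpleGraph V} {k : ℕ}

/-- A closed walk of length `l`, presented as a function `ℕ → V`. -/
def IsCircuit (G : SimpleGraph V) (w : ℕ → V) (l : ℕ) : Prop :=
  w l = w 0 ∧ ∀ i < l, G.Adj (w i) (w (i + 1))

lemma indep_le_compl (hreg : ∀ v : V, (G.neighborSet v).ncard = k) (hk : 0 < k)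
    {s : Set V} (hs : s.Pairwise fun x y => ¬ G.Adj x y) :
    s.ncard ≤ sᶜ.ncard := by
  classical
  set A := (s.toFinite).toFinset with hA
  set B := ((sᶜ : Set V).toFinite).toFinset with hB
  have hcards : s.ncard = A.card := Set.ncard_eq_toFinset_card s s.toFinite
  have hcardc : (sᶜ).ncard = B.card := Set.ncard_eq_toFinset_card _ _
  rw [hcards, hcardc]
  have key := Finset.card_mul_le_card_mul (fun a b => G.Adj a b)
    (s := A) (t := B) (m := k) (n := k) ?hm ?hn
  · exact Nat.le_of_mul_le_mul_right key hk
  case hm =>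
    intro a ha
    have hsub : G.neighborSet a ⊆ ↑(B.bipartiteAbove (fun a b => G.Adj a b) a) := by
      intro b hb
      simp only [Finset.coe_filter, Finset.bipartiteAbove, Set.mem_setOf_eq, Set.Finite.mem_toFinset,
        Finset.mem_filter, hB]
      have hadj : G.Adj a b := hb
      refine ⟨?_, hadj⟩
      simp only [Set.Finite.mem_toFinset, Set.mem_compl_iff]
      intro hbs
      exact hs (by simpa [hA, Set.Finite.mem_toFinset] using ha) hbs hadj.ne hadj
    calc k = (G.neighborSet a).ncard := (hreg a).symm
      _ ≤ (↑(B.bipartiteAbove (fun a b => G.Adj a b) a) : Set V).ncard :=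
          Set.ncard_le_ncard hsub (Set.toFinite _)
      _ = (B.bipartiteAbove (fun a b => G.Adj a b) a).card := Set.ncard_coe_finset _
  case hn =>
    intro b _
    have hsub : (↑(A.bipartiteBelow (fun a b => G.Adj a b) b) : Set V) ⊆ G.neighborSet b := by
      intro a ha
      simp only [Finset.bipartiteBelow, Finset.coe_filter, Set.mem_setOf_eq] at ha
      exact ha.2.symm
    calc (A.bipartiteBelow (fun a b => G.Adj a b) b).card
        = (↑(A.bipartiteBelow (fun a b => G.Adj a b) b) : Set V).ncard := (Set.ncard_coe_finset _).symm
      _ ≤ (G.neighborSet b).ncard := Set.ncard_le_ncard hsub (Set.toFinite _)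
      _ = k := hreg b



lemma circuit_split1 {w : ℕ → V} {l i j : ℕ} (hc : IsCircuit G w l) (hij : i < j) (hjl : j < l)
    (he : w i = w j) : IsCircuit G (fun t => w (i + t)) (j - i) := by
  constructor
  · simp only
    rw [Nat.add_sub_cancel' (le_of_lt hij), Nat.add_zero]
    exact he.symm
  · intro t ht
    simp only
    have h1 : i + t < l := by omega
    have := hc.2 (i + t) h1
    rwa [show i + (t + 1) = (i + t) + 1 by omega]

lemma circuit_split2 {w : ℕ → V} {l i j : ℕ} (hc : IsCircuit G w l) (hij : i < j) (hjl : j < l)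
    (he : w i = w j) :
    IsCircuit G (fun t => if t ≤ i then w t else w (t + (j - i))) (l - (j - i)) := by
  constructor
  · simp only
    have h1 : ¬ (l - (j - i) ≤ i) := by omega
    rw [if_neg h1, if_pos (Nat.zero_le i), show l - (j - i) + (j - i) = l by omega]
    exact hc.1
  · intro t ht
    simp only
    rcases lt_trichotomy t i with h | h | h
    · rw [if_pos (le_of_lt h), if_pos (by omega : t + 1 ≤ i)]
      exact hc.2 t (by omega)
    · rw [if_pos (le_of_eq h), if_neg (by omega),
        show t + 1 + (j - i) = j + 1 by omega, h, he]
      exact hc.2 j hjl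
    · rw [if_neg (by omega), if_neg (by omega),
        show t + 1 + (j - i) = (t + (j - i)) + 1 by omega]
      exact hc.2 (t + (j - i)) (by omega)

lemma circuit_chord1 {w : ℕ → V} {l j : ℕ} (hc : IsCircuit G w l) (hjl : j < l)
    (ha : G.Adj (w j) (w 0)) :
    IsCircuit G (fun t => if t = j + 1 then w 0 else w t) (j + 1) := by
  constructor
  · simp only
    simp [show ¬ ((0:ℕ) = j + 1) by omega]
  · intro t ht
    simp only
    rcases eq_or_lt_of_le (Nat.lt_succ_iff.mp ht) with h | h
    · subst h
      rw [if_neg (by omega), if_pos rfl]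
      exact ha
    · rw [if_neg (by omega), if_neg (by omega)]
      exact hc.2 t (by omega)

lemma circuit_chord2 {w : ℕ → V} {l j : ℕ} (hc : IsCircuit G w l) (hj2 : 1 ≤ j) (hjl : j ≤ l)
    (ha : G.Adj (w 0) (w j)) :
    IsCircuit G (fun t => if t = 0 then w 0 else w (t - 1 + j)) (l - j + 1) := by
  constructor
  · simp only
    rw [show l - j + 1 - 1 + j = l by omega]
    simp [show ¬ (l - j + 1 = 0) by omega, hc.1]
  · intro t ht
    simp only
    rcases Nat.eq_zero_or_pos t with h | h
    · subst h
      rw [if_pos rfl, if_neg (by omega), show 0 + 1 - 1 + j = j by omega]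
      exact ha
    · rw [if_neg (by omega), if_neg (by omega),
        show t + 1 - 1 + j = (t - 1 + j) + 1 by omega]
      exact hc.2 (t - 1 + j) (by omega)

lemma cycle_bound {l : ℕ} (I : Finset ℕ) (hIl : I ⊆ Finset.range l)
    (h : ∀ i ∈ I, (i + 1) % l ∉ I) : 2 * I.card ≤ l := by
  rcases Nat.eq_zero_or_pos l with hl | hl
  · subst hl
    simp [Finset.subset_empty.mp (by simpa using hIl)]
  have e : ∀ m, m < l → (m + 1) % l = if m + 1 = l then 0 else m + 1 := by
    intro m hm
    split
    · next hh => rw [hh, Nat.mod_self]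
    · next hh => exact Nat.mod_eq_of_lt (by omega)
  have hmap : ∀ i ∈ I, (i + 1) % l ∈ Finset.range l \ I := by
    intro i hi
    rw [Finset.mem_sdiff]
    exact ⟨Finset.mem_range.mpr (Nat.mod_lt _ hl), h i hi⟩
  have hinj : Set.InjOn (fun i => (i + 1) % l) ↑I := by
    intro a ha b hb hab
    have ha' : a < l := Finset.mem_range.mp (hIl (by simpa using ha))
    have hb' : b < l := Finset.mem_range.mp (hIl (by simpa using hb))
    simp only at hab
    rw [e a ha', e b hb'] at hab
    split_ifs at hab <;> omega
  have := Finset.card_le_card_of_injOn _ hmap hinj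
  have hsd : (Finset.range l \ I).card = l - I.card := by
    rw [Finset.card_sdiff_of_subset hIl, Finset.card_range]
  have hle : I.card ≤ l := by
    simpa [Finset.card_range] using Finset.card_le_card hIl
  omega



lemma exists_odd_circuit (hconn : G.Connected) (hodd : Odd (Fintype.card V))
    (hreg : ∀ v : V, (G.neighborSet v).ncard = k) (hk : 0 < k) :
    ∃ l w, Odd l ∧ IsCircuit G w l := by
  classical
  have hpos : 0 < Fintype.card V := by
    rcases hodd with ⟨m, hm⟩; omega
  obtain ⟨r⟩ := Fintype.card_pos_iff.mp hpos
  by_cases hpar : ∃ x y, G.Adj x y ∧ (Even (G.dist r x) ↔ Even (G.dist r y))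
  · obtain ⟨x, y, hxy, hp⟩ := hpar
    obtain ⟨p, hpl⟩ := hconn.exists_walk_length_eq_dist r x
    obtain ⟨q, hql⟩ := hconn.exists_walk_length_eq_dist r y
    set a := p.length with ha
    set b := q.length with hb
    refine ⟨a + 1 + b, fun t => if t ≤ a then p.getVert t else q.getVert (a + 1 + b - t),
      ?_, ?_, ?_⟩
    · have hev : Even (a + b) := by
        have : Even a ↔ Even b := by
          have h' := hp
          rw [← hpl, ← hql] at h'
          exact h'
        rcases Nat.even_or_odd a with h | h
        · exact Nat.even_add.mpr ⟨fun _ => this.mp h, fun _ => h⟩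
        · rw [Nat.even_add]
          constructor
          · intro hh; exact absurd hh (Nat.not_even_iff_odd.mpr h)
          · intro hh; exact absurd (this.mpr hh) (Nat.not_even_iff_odd.mpr h)
      rw [Nat.odd_iff] at *
      rw [Nat.even_iff] at hev
      omega
    · simp only
      rw [if_neg (by omega), if_pos (by omega), Nat.sub_self]
      simp [Walk.getVert_zero]
    · intro t ht
      simp only
      rcases lt_trichotomy t a with h | h | h
      · rw [if_pos (by omega), if_pos (by omega)]
        exact p.adj_getVert_succ (by omega)
      · rw [if_pos (by omega), if_neg (by omega), h,
          show a + 1 + b - (a + 1) = b by omega]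
        have h1 : p.getVert a = x := by rw [ha]; exact p.getVert_length
        have h2 : q.getVert b = y := by rw [hb]; exact q.getVert_length
        rw [h1, h2]
        exact hxy
      · rw [if_neg (show ¬ t ≤ a by omega), if_neg (show ¬ t + 1 ≤ a by omega)]
        have h1 : a + 1 + b - (t + 1) < b := by omega
        have h2 := (q.adj_getVert_succ h1).symm
        rwa [show a + 1 + b - (t + 1) + 1 = a + 1 + b - t by omega] at h2
  · push_neg at hpar
    exfalso
    set s₁ : Set V := {v | Even (G.dist r v)} with hs₁
    have hind1 : s₁.Pairwise fun x y => ¬ G.Adj x y := by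
      intro x hx y hy _ hadj
      rcases hpar x y hadj with ⟨-, h2⟩ | ⟨h1, -⟩
      · exact h2 hy
      · exact h1 hx
    have hind2 : (s₁ᶜ).Pairwise fun x y => ¬ G.Adj x y := by
      intro x hx y hy _ hadj
      simp only [hs₁, Set.mem_compl_iff, Set.mem_setOf_eq] at hx hy
      rcases hpar x y hadj with ⟨h1, -⟩ | ⟨-, h2⟩
      · exact hx h1
      · exact hy h2
    have h1 := indep_le_compl hreg hk hind1
    have h2 := indep_le_compl hreg hk hind2
    rw [compl_compl] at h2
    have hsum : s₁.ncard + (s₁ᶜ).ncard = Nat.card V := Set.ncard_add_ncard_compl s₁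
    rw [Nat.card_eq_fintype_card] at hsum
    rw [Nat.odd_iff] at hodd
    omega



set_option maxHeartbeats 1000000 in
lemma averaging (hvt : ∀ x y : V, ∃ φ : G ≃g G, φ x = y)
    {S : Set V} (hS : S.Pairwise fun x y => ¬ G.Adj x y)
    (hcard : 2 * S.ncard + 1 = Fintype.card V)
    {w : ℕ → V} {l : ℕ} (hc : IsCircuit G w l) (hlodd : Odd l)
    (hln : l < Fintype.card V) : False := by
  classical
  set n := Fintype.card V with hn
  set Γ : Finset (Equiv.Perm V) :=
    Finset.univ.filter (fun σ => ∀ a b : V, G.Adj (σ a) (σ b) ↔ G.Adj a b) with hΓ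
  have memΓ : ∀ σ : Equiv.Perm V, σ ∈ Γ ↔ ∀ a b : V, G.Adj (σ a) (σ b) ↔ G.Adj a b := by
    intro σ; simp [hΓ]
  set A : Finset V := (S.toFinite).toFinset with hA
  have hAmem : ∀ a : V, a ∈ A ↔ a ∈ S := fun a => Set.Finite.mem_toFinset _
  have hAcard : A.card = S.ncard := (Set.ncard_eq_toFinset_card S S.toFinite).symm
  set N : V → V → ℕ := fun x s => (Γ.filter (fun σ => σ s = x)).card with hN
  -- Claim A
  have claimA : ∀ s x y : V, N x s = N y s := by
    intro s x y
    obtain ⟨φ, hφ⟩ := hvt x y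
    set τ : Equiv.Perm V := φ.toEquiv with hτ
    have hτadj : ∀ a b : V, G.Adj (τ a) (τ b) ↔ G.Adj a b := fun a b => φ.map_rel_iff
    have hτx : τ x = y := hφ
    have hmul : ∀ σ : Equiv.Perm V, σ ∈ Γ → τ * σ ∈ Γ := by
      intro σ hσ
      rw [memΓ] at hσ ⊢
      intro a b
      rw [Equiv.Perm.mul_apply, Equiv.Perm.mul_apply, hτadj, hσ]
    have hinvmem : ∀ σ : Equiv.Perm V, σ ∈ Γ → τ⁻¹ * σ ∈ Γ := by
      intro σ hσ
      rw [memΓ] at hσ ⊢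
      intro a b
      rw [Equiv.Perm.mul_apply, Equiv.Perm.mul_apply, ← hσ a b,
        ← hτadj (τ⁻¹ (σ a)) (τ⁻¹ (σ b)), Equiv.Perm.coe_inv, Equiv.apply_symm_apply, Equiv.apply_symm_apply]
    show (Γ.filter (fun σ : Equiv.Perm V => σ s = x)).card
        = (Γ.filter (fun σ : Equiv.Perm V => σ s = y)).card
    refine Finset.card_bij' (fun σ _ => τ * σ) (fun σ _ => τ⁻¹ * σ) ?_ ?_ ?_ ?_
    · intro σ hσ
      rw [Finset.mem_filter] at hσ ⊢
      exact ⟨hmul σ hσ.1, by rw [Equiv.Perm.mul_apply, hσ.2, hτx]⟩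
    · intro σ hσ
      rw [Finset.mem_filter] at hσ ⊢
      refine ⟨hinvmem σ hσ.1, ?_⟩
      rw [Equiv.Perm.mul_apply, hσ.2, ← hτx, Equiv.Perm.coe_inv, Equiv.symm_apply_apply]
    · intro σ _
      exact inv_mul_cancel_left τ σ
    · intro σ _
      exact mul_inv_cancel_left τ σ
  -- Claim B
  have claimB : ∀ s : V, n * N s s = Γ.card := by
    intro s
    have h1 : Γ.card = ∑ x : V, N x s :=
      Finset.card_eq_sum_card_fiberwise (f := fun σ : Equiv.Perm V => σ s) (t := Finset.univ)
        (fun _ _ => Finset.mem_univ _)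
    rw [h1, Finset.sum_congr rfl (fun x _ => claimA s x s), Finset.sum_const, Finset.card_univ,
      smul_eq_mul]
  -- Claim C
  have claimC : ∀ x : V,
      (Γ.filter (fun σ : Equiv.Perm V => x ∈ ⇑σ '' S)).card = ∑ s ∈ A, N x s := by
    intro x
    rw [Finset.card_eq_sum_card_fiberwise (f := fun σ => σ.symm x) (t := A) ?_]
    · refine Finset.sum_congr rfl (fun s hs => ?_)
      rw [Finset.filter_filter]
      congr 1
      apply Finset.filter_congr
      intro σ hσ
      constructor
      · rintro ⟨-, h2⟩
        rw [← h2, Equiv.apply_symm_apply]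
      · intro h2
        refine ⟨⟨s, (hAmem s).mp hs, h2⟩, ?_⟩
        rw [← h2, Equiv.symm_apply_apply]
    · intro σ hσ
      rw [Finset.mem_coe, Finset.mem_filter] at hσ
      obtain ⟨s, hsS, hsx⟩ := hσ.2
      rw [Finset.mem_coe, hAmem]
      show σ.symm x ∈ S
      rw [← hsx, Equiv.symm_apply_apply]
      exact hsS
  -- the position sets
  set II : Equiv.Perm V → Finset ℕ :=
    fun σ => (Finset.range l).filter (fun i => w i ∈ ⇑σ '' S) with hII
  have key2 : ∀ σ ∈ Γ, 2 * (II σ).card + 1 ≤ l := by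
    intro σ hσ
    have himg : (σ '' S).Pairwise fun x y => ¬ G.Adj x y := by
      rintro x ⟨s, hsS, rfl⟩ y ⟨t, htS, rfl⟩ hne hadj
      have hst : s ≠ t := fun h => hne (by rw [h])
      exact hS hsS htS hst (((memΓ σ).mp hσ s t).mp hadj)
    have hb : ∀ i ∈ II σ, (i + 1) % l ∉ II σ := by
      intro i hi hi1
      rw [hII, Finset.mem_filter, Finset.mem_range] at hi hi1
      have hadj : G.Adj (w i) (w ((i + 1) % l)) := by
        by_cases hcase : i + 1 = l
        · rw [hcase, Nat.mod_self, ← hc.1, ← hcase]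
          exact hc.2 i hi.1
        · rw [Nat.mod_eq_of_lt (by omega)]
          exact hc.2 i hi.1
      exact himg hi.2 hi1.2 hadj.ne hadj
    have := cycle_bound (II σ) (Finset.filter_subset _ _) hb
    rw [Nat.odd_iff] at hlodd
    omega
  -- key1
  set D : ℕ := ∑ s ∈ A, N s s with hD
  have key1 : ∑ σ ∈ Γ, (II σ).card = l * D := by
    calc ∑ σ ∈ Γ, (II σ).card
        = ∑ σ ∈ Γ, ∑ i ∈ Finset.range l, (if w i ∈ ⇑σ '' S then 1 else 0) := by
          refine Finset.sum_congr rfl (fun σ _ => ?_)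
          rw [hII, Finset.card_filter]
      _ = ∑ i ∈ Finset.range l, ∑ σ ∈ Γ, (if w i ∈ ⇑σ '' S then 1 else 0) := Finset.sum_comm
      _ = ∑ i ∈ Finset.range l, (Γ.filter (fun σ : Equiv.Perm V => w i ∈ ⇑σ '' S)).card := by
          refine Finset.sum_congr rfl (fun i _ => ?_)
          rw [Finset.card_filter]
      _ = ∑ i ∈ Finset.range l, ∑ s ∈ A, N (w i) s := by
          exact Finset.sum_congr rfl (fun i _ => claimC (w i))
      _ = ∑ i ∈ Finset.range l, ∑ s ∈ A, N s s := by
          refine Finset.sum_congr rfl (fun i _ => ?_)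
          exact Finset.sum_congr rfl (fun s _ => claimA s (w i) s)
      _ = l * D := by rw [Finset.sum_const, Finset.card_range, smul_eq_mul]
  have hΓpos : 0 < Γ.card := by
    refine Finset.card_pos.mpr ⟨Equiv.refl V, ?_⟩
    rw [memΓ]
    intro a b
    simp
  -- combine
  have h1 : 2 * (l * D) + Γ.card ≤ Γ.card * l := by
    calc 2 * (l * D) + Γ.card = (∑ σ ∈ Γ, 2 * (II σ).card) + ∑ σ ∈ Γ, 1 := by
          rw [← key1, Finset.mul_sum, Finset.sum_const, smul_eq_mul, mul_one]
      _ = ∑ σ ∈ Γ, (2 * (II σ).card + 1) := by rw [← Finset.sum_add_distrib]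
      _ ≤ ∑ σ ∈ Γ, l := Finset.sum_le_sum key2
      _ = Γ.card * l := by rw [Finset.sum_const, smul_eq_mul]
  have h2 : n * D = A.card * Γ.card := by
    calc n * D = ∑ s ∈ A, n * N s s := by rw [hD, Finset.mul_sum]
      _ = ∑ s ∈ A, Γ.card := Finset.sum_congr rfl (fun s _ => claimB s)
      _ = A.card * Γ.card := by rw [Finset.sum_const, smul_eq_mul]
  -- final arithmetic
  have h3 : n * (2 * (l * D) + Γ.card) ≤ n * (Γ.card * l) := Nat.mul_le_mul_left n h1
  have h4 : 2 * l * (A.card * Γ.card) + n * Γ.card ≤ n * Γ.card * l := by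
    calc 2 * l * (A.card * Γ.card) + n * Γ.card
        = n * (2 * (l * D)) + n * Γ.card := by rw [← h2]; ring
      _ = n * (2 * (l * D) + Γ.card) := by ring
      _ ≤ n * (Γ.card * l) := h3
      _ = n * Γ.card * l := by ring
  have h5 : 2 * l * A.card + n ≤ n * l := by
    have := h4
    rw [show 2 * l * (A.card * Γ.card) = (2 * l * A.card) * Γ.card by ring,
      show n * Γ.card = n * Γ.card by rfl, show n * Γ.card * l = (n * l) * Γ.card by ring] at this
    have h6 : (2 * l * A.card + n) * Γ.card ≤ (n * l) * Γ.card := by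
      calc (2 * l * A.card + n) * Γ.card = 2 * l * A.card * Γ.card + n * Γ.card := by ring
        _ ≤ (n * l) * Γ.card := this
    exact Nat.le_of_mul_le_mul_right h6 hΓpos
  rw [hAcard] at h5
  -- now: 2 * l * S.ncard + n ≤ n * l, with n = 2 * S.ncard + 1 and l < n
  have hl1 : 1 ≤ l := by
    rw [Nat.odd_iff] at hlodd; omega
  nlinarith [h5, hcard, hln, hl1]


end IndepAux

open IndepAux

/-- A connected vertex-transitive odd graph with degree `k ≥ 4` has independence number
less than `(n - 1) / 2`. -/
theorem indep_number_lt {V : Type*} [Fintype V] (G : SimpleGraph V) (k : ℕ)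
    (hconn : G.Connected)
    (hvt : ∀ x y : V, ∃ φ : G ≃g G, φ x = y)
    (hodd : Odd (Fintype.card V))
    (hreg : ∀ v : V, (G.neighborSet v).ncard = k)
    (hk : 4 ≤ k) :
    ∀ s : Set V, (s.Pairwise fun x y => ¬ G.Adj x y) →
      s.ncard < (Fintype.card V - 1) / 2 := by
  intro s hs
  classical
  by_contra hcon
  push_neg at hcon
  set n := Fintype.card V with hn
  -- basic facts
  have hnodd : n % 2 = 1 := Nat.odd_iff.mp hodd
  have h1 : s.ncard ≤ sᶜ.ncard := indep_le_compl hreg (by omega) hs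
  have hsum : s.ncard + sᶜ.ncard = n := by
    rw [hn, ← Nat.card_eq_fintype_card]
    exact Set.ncard_add_ncard_compl s
  have hcard : 2 * s.ncard + 1 = n := by omega
  -- n ≥ k+1
  have hnk : k + 1 ≤ n := by
    have hne : (0 : ℕ) < n := by omega
    obtain ⟨v⟩ := Fintype.card_pos_iff.mp hne
    have hsub : G.neighborSet v ⊆ {v}ᶜ := by
      intro u hu
      simp only [Set.mem_compl_iff, Set.mem_singleton_iff]
      rintro rfl
      exact G.irrefl hu
    have := Set.ncard_le_ncard hsub (Set.toFinite _)
    rw [hreg v] at this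
    have hcompl : ({v}ᶜ : Set V).ncard = n - 1 := by
      have := Set.ncard_add_ncard_compl ({v} : Set V)
      rw [Nat.card_eq_fintype_card, Set.ncard_singleton] at this
      omega
    omega
  -- minimal odd circuit
  have hex : ∃ l, Odd l ∧ ∃ w : ℕ → V, IsCircuit G w l := by
    obtain ⟨l₀, w₀, h₀, hc₀⟩ := exists_odd_circuit hconn hodd hreg (by omega)
    exact ⟨l₀, h₀, w₀, hc₀⟩
  set l := Nat.find hex with hldef
  obtain ⟨hlodd, w, hc⟩ := Nat.find_spec hex
  have hmin : ∀ m, m < l → ¬ (Odd m ∧ ∃ w : ℕ → V, IsCircuit G w m) :=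
    fun m hm => Nat.find_min hex hm
  have hl1 : 1 ≤ l := by
    have := Nat.odd_iff.mp hlodd; omega
  -- distinctness of w on [0, l)
  have hinj : ∀ i j : ℕ, i < j → j < l → w i ≠ w j := by
    intro i j hij hjl he
    have c1 := circuit_split1 hc hij hjl he
    have c2 := circuit_split2 hc hij hjl he
    have hpar : Odd (j - i) ∨ Odd (l - (j - i)) := by
      rw [Nat.odd_iff, Nat.odd_iff]
      have := Nat.odd_iff.mp hlodd
      omega
    rcases hpar with h | h
    · exact hmin (j - i) (by omega) ⟨h, _, c1⟩
    · exact hmin (l - (j - i)) (by omega) ⟨h, _, c2⟩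
  have hinjF : Function.Injective (fun i : Fin l => w i.val) := by
    intro i j hij
    by_contra hne
    have hne' : i.val ≠ j.val := fun h => hne (Fin.ext h)
    rcases Nat.lt_or_ge i.val j.val with h | h
    · exact hinj i.val j.val h j.isLt hij
    · exact hinj j.val i.val (by omega) i.isLt hij.symm
  have hln : l ≤ n := by
    have := Fintype.card_le_of_injective _ hinjF
    simpa [hn] using this
  -- case l = n : find a chord
  have hlnn : l < n := by
    rcases eq_or_lt_of_le hln with heq | h
    · exfalso
      have hbij : Function.Bijective (fun i : Fin l => w i.val) := by
        rw [Fintype.bijective_iff_injective_and_card]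
        exact ⟨hinjF, by simp [heq, hn]⟩
      -- a neighbor of w 0 distinct from w 1 and w (l-1)
      have hnonempty : (G.neighborSet (w 0) \ {w 1, w (l - 1)}).Nonempty := by
        by_contra hemp
        rw [Set.not_nonempty_iff_eq_empty, Set.diff_eq_empty] at hemp
        have h2 : (G.neighborSet (w 0)).ncard ≤ ({w 1, w (l - 1)} : Set V).ncard :=
          Set.ncard_le_ncard hemp (Set.toFinite _)
        have h3 : ({w 1, w (l - 1)} : Set V).ncard ≤ 2 := by
          apply le_trans (Set.ncard_insert_le _ _)
          simp
        rw [hreg] at h2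
        omega
      obtain ⟨v, hv⟩ := hnonempty
      have hvadj : G.Adj (w 0) v := hv.1
      obtain ⟨j, hj⟩ := hbij.2 v
      simp only at hj
      have hj0 : j.val ≠ 0 := by
        intro h
        rw [h] at hj
        exact G.irrefl (hj ▸ hvadj)
      have hj1 : j.val ≠ 1 := by
        intro h
        apply hv.2
        rw [← hj, h]
        simp
      have hjl1 : j.val ≠ l - 1 := by
        intro h
        apply hv.2
        rw [← hj, h]
        simp
      -- l = n ≥ k+1 ≥ 5
      have hl5 : 5 ≤ l := by omega
      have hj2 : 2 ≤ j.val := by omega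
      have hjle : j.val ≤ l - 2 := by
        have := j.isLt
        omega
      have hadj : G.Adj (w 0) (w j.val) := hj ▸ hvadj
      have c1 := circuit_chord1 hc j.isLt hadj.symm
      have c2 := circuit_chord2 hc (by omega) (le_of_lt j.isLt) hadj
      have hpar : Odd (j.val + 1) ∨ Odd (l - j.val + 1) := by
        rw [Nat.odd_iff, Nat.odd_iff]
        have := Nat.odd_iff.mp hlodd
        have := j.isLt
        omega
      rcases hpar with hp | hp
      · exact hmin (j.val + 1) (by omega) ⟨hp, _, c1⟩
      · exact hmin (l - j.val + 1) (by omega) ⟨hp, _, c2⟩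
    · exact h
  exact averaging hvt hs hcard hc hlodd hlnn
end

section
/- Let G be a simple vertex-transitive graph containing a triangle. Then for every subset X of the vertex set of G, the number of isolated vertices (singleton components) of G − X is at most the number of edges of the subgraph of G induced by X. -/
open SimpleGraph Finset

/-- In a vertex-transitive graph with a triangle, for every vertex subset `X` the number of
isolated vertices (singleton components) of `G - X` is at most the number of edges of the
subgraph induced by `X`. -/
theorem singletons_le_edges {V : Type*} [Fintype V] (G : SimpleGraph V)
    (hvt : ∀ x y : V, ∃ φ : G ≃g G, φ x = y)
    (htri : ∃ a b c : V, G.Adj a b ∧ G.Adj b c ∧ G.Adj a c) :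
    ∀ X : Set V,
      {v : V | v ∉ X ∧ ∀ w : V, G.Adj v w → w ∈ X}.ncard ≤
        {e ∈ G.edgeSet | ∀ x ∈ e, x ∈ X}.ncard := by
  classical
  intro X
  obtain ⟨a, b, c, hab, hbc, hac⟩ := htri
  -- triangle-edge count at a vertex: edges both of whose endpoints are adjacent to v
  set TE : V → Finset (Sym2 V) := fun v =>
    Finset.univ.filter (fun e : Sym2 V => e ∈ G.edgeSet ∧ ∀ x ∈ e, G.Adj v x) with hTE
  set t : V → ℕ := fun v => (TE v).card with ht
  have ht_le : ∀ u v : V, t u ≤ t v := by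
    intro u v
    obtain ⟨φ, hφ⟩ := hvt u v
    apply Finset.card_le_card_of_injOn (fun e => Sym2.map φ e)
    · intro e he
      simp only [hTE, Finset.mem_coe, Finset.mem_filter, Finset.mem_univ, true_and] at he ⊢
      obtain ⟨he1, he2⟩ := he
      constructor
      · induction e using Sym2.ind with
        | _ x y =>
          rw [SimpleGraph.mem_edgeSet] at he1
          rw [Sym2.map_pair_eq, SimpleGraph.mem_edgeSet]
          exact φ.map_adj_iff.mpr he1
      · intro x hx
        rw [Sym2.mem_map] at hx
        obtain ⟨y, hy, rfl⟩ := hx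
        rw [← hφ]
        exact φ.map_adj_iff.mpr (he2 y hy)
    · exact (Sym2.map.injective φ.injective).injOn
  have ht_const : ∀ u v : V, t u = t v := fun u v => le_antisymm (ht_le u v) (ht_le v u)
  have ht_pos : ∀ v : V, 1 ≤ t v := by
    intro v
    rw [ht_const v a]
    have : s(b, c) ∈ TE a := by
      simp only [hTE, Finset.mem_filter, Finset.mem_univ, true_and]
      refine ⟨hbc, ?_⟩
      intro x hx
      rcases Sym2.mem_iff.mp hx with rfl | rfl
      · exact hab
      · exact hac
    exact Finset.card_pos.mpr ⟨_, this⟩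
  -- Finset versions of the two sets
  set S : Finset V := Finset.univ.filter (fun v => v ∉ X ∧ ∀ w, G.Adj v w → w ∈ X) with hS
  set E : Finset (Sym2 V) :=
    Finset.univ.filter (fun e => e ∈ G.edgeSet ∧ ∀ x ∈ e, x ∈ X) with hEdef
  have hSset : {v : V | v ∉ X ∧ ∀ w : V, G.Adj v w → w ∈ X} = ↑S := by
    ext v; simp [hS]
  have hEset : {e ∈ G.edgeSet | ∀ x ∈ e, x ∈ X} = ↑E := by
    ext e; simp [hEdef]
  rw [hSset, hEset, Set.ncard_coe_finset, Set.ncard_coe_finset]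
  -- double counting set
  set P : Finset (V × Sym2 V) :=
    (S ×ˢ Finset.univ).filter
      (fun p : V × Sym2 V => p.2 ∈ G.edgeSet ∧ ∀ x ∈ p.2, G.Adj p.1 x) with hP
  have hmemP : ∀ p : V × Sym2 V,
      p ∈ P ↔ p.1 ∈ S ∧ p.2 ∈ G.edgeSet ∧ ∀ x ∈ p.2, G.Adj p.1 x := by
    intro p
    simp [hP, Finset.mem_filter, Finset.mem_product, and_assoc]
  have h1 : P.card = ∑ v ∈ S, t v := by
    rw [Finset.card_eq_sum_card_fiberwise (f := Prod.fst) (t := S)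
      (fun p hp => ((hmemP p).mp hp).1)]
    refine Finset.sum_congr rfl fun v hv => ?_
    apply Finset.card_bij (fun p _ => p.2)
    · intro p hp
      simp only [Finset.mem_filter] at hp
      obtain ⟨hp1, hp2⟩ := hp
      rw [hmemP] at hp1
      simp only [hTE, Finset.mem_filter, Finset.mem_univ, true_and]
      exact ⟨hp1.2.1, by rw [hp2] at hp1; exact hp1.2.2⟩
    · intro p hp q hq hpq
      simp only [Finset.mem_filter] at hp hq
      exact Prod.ext (hp.2.trans hq.2.symm) hpq
    · intro e he
      simp only [hTE, Finset.mem_filter, Finset.mem_univ, true_and] at he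
      refine ⟨(v, e), ?_, rfl⟩
      rw [Finset.mem_filter]
      exact ⟨(hmemP _).mpr ⟨hv, he.1, he.2⟩, rfl⟩
  have h2 : P.card = ∑ e ∈ E, (P.filter (fun p => p.2 = e)).card := by
    apply Finset.card_eq_sum_card_fiberwise (f := Prod.snd) (t := E)
    intro p hp
    rw [Finset.mem_coe, hmemP] at hp
    simp only [hEdef, Finset.mem_coe, Finset.mem_filter, Finset.mem_univ, true_and]
    refine ⟨hp.2.1, fun x hx => ?_⟩
    have hvS := hp.1
    simp only [hS, Finset.mem_filter, Finset.mem_univ, true_and] at hvS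
    exact hvS.2 x (hp.2.2 x hx)
  have h3 : ∀ e ∈ E, (P.filter (fun p => p.2 = e)).card ≤ t a := by
    intro e he
    simp only [hEdef, Finset.mem_filter, Finset.mem_univ, true_and] at he
    induction e using Sym2.ind with
    | _ x y =>
      have hxy : G.Adj x y := G.mem_edgeSet.mp he.1
      rw [ht_const a x]
      apply Finset.card_le_card_of_injOn (fun p => s(p.1, y))
      · intro p hp
        simp only [Finset.mem_coe, Finset.mem_filter, hmemP] at hp
        obtain ⟨⟨_, _, hadj⟩, hpe⟩ := hp
        have hpy : G.Adj p.1 y := by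
          apply hadj; rw [hpe]; exact Sym2.mem_mk_right x y
        have hpx : G.Adj p.1 x := by
          apply hadj; rw [hpe]; exact Sym2.mem_mk_left x y
        simp only [hTE, Finset.mem_coe, Finset.mem_filter, Finset.mem_univ, true_and]
        refine ⟨G.mem_edgeSet.mpr hpy, fun z hz => ?_⟩
        rcases Sym2.mem_iff.mp hz with rfl | rfl
        · exact hpx.symm
        · exact hxy
      · intro p hp q hq hpq
        simp only [Finset.mem_coe, Finset.mem_filter, hmemP] at hp hq
        have h1 := hp.1.2.2 y (by rw [hp.2]; exact Sym2.mem_mk_right x y)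
        have h2 := hq.1.2.2 y (by rw [hq.2]; exact Sym2.mem_mk_right x y)
        simp only [Sym2.eq, Sym2.rel_iff', Prod.swap_prod_mk, Prod.mk.injEq, and_true] at hpq
        have hfst : p.1 = q.1 := by
          rcases hpq with h | ⟨h, h'⟩
          · exact h
          · rw [h] at h1
            exact absurd h1 (G.loopless.irrefl y)
        exact Prod.ext hfst (hp.2.trans hq.2.symm)
  have key : t a * S.card ≤ t a * E.card := by
    calc t a * S.card = ∑ v ∈ S, t v := by
          rw [Finset.sum_congr rfl fun v _ => ht_const v a, Finset.sum_const, smul_eq_mul,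
            mul_comm]
      _ = P.card := h1.symm
      _ = ∑ e ∈ E, (P.filter (fun p => p.2 = e)).card := h2
      _ ≤ ∑ e ∈ E, t a := Finset.sum_le_sum h3
      _ = t a * E.card := by rw [Finset.sum_const, smul_eq_mul, mul_comm]
  exact Nat.le_of_mul_le_mul_left key (ht_pos a)
end

section
/- Let G be a simple connected 4-regular vertex-transitive triangle-free graph of odd order. Then G has no two distinct vertices u and v with N(u) = N(v). -/
open SimpleGraph

/-- A connected 4-regular vertex-transitive triangle-free odd graph has no two distinct
vertices `u` and `v` with `N(u) = N(v)`. -/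
theorem no_false_twins {V : Type*} [Fintype V] (G : SimpleGraph V)
    (hconn : G.Connected)
    (hvt : ∀ x y : V, ∃ φ : G ≃g G, φ x = y)
    (hreg : ∀ v : V, (G.neighborSet v).ncard = 4)
    (htf : G.CliqueFree 3)
    (hodd : Odd (Fintype.card V)) :
    ¬ ∃ u v : V, u ≠ v ∧ G.neighborSet u = G.neighborSet v := by
  classical
  rintro ⟨u, v, huv, hN⟩
  set S : V → Set V := fun x => {y | G.neighborSet y = G.neighborSet x} with hSdef
  -- automorphisms map neighbor sets to neighbor sets
  have hmapN : ∀ (φ : G ≃g G) (x : V), G.neighborSet (φ x) = φ '' G.neighborSet x := by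
    intro φ x
    ext y
    constructor
    · intro hy
      refine ⟨φ.symm y, ?_, by simp⟩
      have h1 : G.Adj (φ x) (φ (φ.symm y)) := by simpa using hy
      exact φ.map_adj_iff.mp h1
    · rintro ⟨z, hz, rfl⟩
      exact φ.map_adj_iff.mpr hz
  -- automorphisms map twin classes to twin classes
  have hmapS : ∀ (φ : G ≃g G) (x : V), S (φ x) = φ '' S x := by
    intro φ x
    ext z
    simp only [hSdef, Set.mem_setOf_eq, Set.mem_image]
    constructor
    · intro hz
      refine ⟨φ.symm z, ?_, by simp⟩
      have h1 : φ '' G.neighborSet (φ.symm z) = φ '' G.neighborSet x := by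
        rw [← hmapN, ← hmapN, φ.apply_symm_apply]; exact hz
      exact (Set.image_eq_image φ.injective).mp h1
    · rintro ⟨w, hw, rfl⟩
      rw [hmapN, hmapN, hw]
  set k : ℕ := (S u).ncard with hkdef
  -- all twin classes have the same size k
  have hcard : ∀ x : V, (S x).ncard = k := by
    intro x
    obtain ⟨φ, hφ⟩ := hvt u x
    rw [← hφ, hmapS, Set.ncard_image_of_injective _ φ.injective]
  -- k divides the order of the graph
  have hdvd : k ∣ Fintype.card V := by
    let s : Setoid V := ⟨fun a b => G.neighborSet a = G.neighborSet b,
      ⟨fun _ => rfl, Eq.symm, Eq.trans⟩⟩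
    have hfiber : ∀ i : Quotient s, Fintype.card {x // Quotient.mk s x = i} = k := by
      intro i
      obtain ⟨w, rfl⟩ := i.exists_rep
      have hset : {x : V | Quotient.mk s x = Quotient.mk s w} = S w := by
        ext x
        simp only [Set.mem_setOf_eq, hSdef, Quotient.eq]
        exact Iff.rfl
      have : Fintype.card {x // Quotient.mk s x = Quotient.mk s w}
          = ({x : V | Quotient.mk s x = Quotient.mk s w} : Set V).ncard := by
        rw [Set.ncard_eq_toFinset_card']
        simp [Set.toFinset_setOf, Fintype.card_subtype]
      rw [this, hset, hcard]
    have htot : Fintype.card V = Fintype.card (Quotient s) * k := by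
      rw [← Fintype.card_congr (Equiv.sigmaFiberEquiv (Quotient.mk s)),
        Fintype.card_sigma]
      simp [hfiber, Finset.sum_const, Nat.mul_comm]
    exact ⟨Fintype.card (Quotient s), by rw [htot, Nat.mul_comm]⟩
  -- hence k is odd
  have hkodd : Odd k := by
    rcases Nat.even_or_odd k with hk | hk
    · exfalso
      obtain ⟨c, hc⟩ := hdvd
      have : Even (Fintype.card V) := by rw [hc]; exact hk.mul_right c
      exact (Nat.not_even_iff_odd.mpr hodd) this
    · exact hk
  -- k ≥ 2
  have hk2 : 2 ≤ k := by
    have hsub : ({u, v} : Set V) ⊆ S u := by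
      intro x hx
      rcases hx with rfl | rfl
      · exact rfl
      · exact hN.symm
    calc 2 = ({u, v} : Set V).ncard := (Set.ncard_pair huv).symm
    _ ≤ (S u).ncard := Set.ncard_le_ncard hsub (Set.toFinite _)
  -- classes of neighbors of a vertex x lie inside N(x)
  have hSsub : ∀ x w : V, w ∈ G.neighborSet x → S w ⊆ G.neighborSet x := by
    intro x w hw y hy
    have hyx : G.neighborSet y = G.neighborSet w := hy
    have hx : x ∈ G.neighborSet w := hw.symm
    have : x ∈ G.neighborSet y := hyx ▸ hx
    exact this.symm
  -- k ≤ 4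
  obtain ⟨w, hw⟩ : (G.neighborSet u).Nonempty := by
    apply Set.nonempty_of_ncard_ne_zero
    rw [hreg u]; norm_num
  have hk4 : k ≤ 4 := by
    have hsub : S u ⊆ G.neighborSet w := by
      intro y hy
      have hyx : G.neighborSet y = G.neighborSet u := hy
      have : w ∈ G.neighborSet y := hyx ▸ hw
      exact this.symm
    calc k ≤ (G.neighborSet w).ncard := Set.ncard_le_ncard hsub (Set.toFinite _)
    _ = 4 := hreg w
  -- so k = 3
  have hk3 : k = 3 := by
    obtain ⟨m, hm⟩ := hkodd
    omega
  -- final contradiction inside N(u)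
  have hSw : S w ⊆ G.neighborSet u := hSsub u w hw
  obtain ⟨w4, hw4, hw4'⟩ : ∃ w4 ∈ G.neighborSet u, w4 ∉ S w := by
    by_contra h
    push_neg at h
    have : (G.neighborSet u).ncard ≤ (S w).ncard := Set.ncard_le_ncard h (Set.toFinite _)
    rw [hreg u, hcard w, hk3] at this
    omega
  have hSw4 : S w4 ⊆ G.neighborSet u := hSsub u w4 hw4
  have hdisj : Disjoint (S w) (S w4) := by
    rw [Set.disjoint_left]
    intro z hz hz4
    have h1 : G.neighborSet z = G.neighborSet w := hz
    have h2 : G.neighborSet z = G.neighborSet w4 := hz4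
    exact hw4' (h1 ▸ h2.symm : G.neighborSet w4 = G.neighborSet w)
  have hunion : (S w ∪ S w4).ncard = 6 := by
    rw [Set.ncard_union_eq hdisj (Set.toFinite _) (Set.toFinite _), hcard w, hcard w4, hk3]
  have : (S w ∪ S w4).ncard ≤ 4 := by
    rw [← hreg u]
    exact Set.ncard_le_ncard (Set.union_subset hSw hSw4) (Set.toFinite _)
  omega
end

section
/- Let G be a simple connected vertex-transitive graph of odd order with vertex degree k = 4 and girth g = 4. Then for each edge e of G, there are at least two distinct quadrangles (4-cycles) of G containing e, and there is another edge e' adjacent to e such that the number of quadrangles of G containing e' equals the number of quadrangles of G containing e. -/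
open SimpleGraph

set_option linter.unusedSectionVars false
set_option linter.unreachableTactic false
set_option linter.unusedTactic false
set_option maxHeartbeats 1000000

/-- `Q` is the edge set of a quadrangle (4-cycle) of `G`. -/
def IsQuadrangle {V : Type*} (G : SimpleGraph V) (Q : Set (Sym2 V)) : Prop :=
  ∃ a b c d : V, [a, b, c, d].Nodup ∧
    G.Adj a b ∧ G.Adj b c ∧ G.Adj c d ∧ G.Adj d a ∧
    Q = {s(a, b), s(b, c), s(c, d), s(d, a)}

namespace QuadAux

open Finset

lemma nodup4 {V : Type*} {a b c d : V} : [a,b,c,d].Nodup ↔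
    a ≠ b ∧ a ≠ c ∧ a ≠ d ∧ b ≠ c ∧ b ≠ d ∧ c ≠ d := by
  simp [List.nodup_cons]; tauto

variable {V : Type*} [Fintype V] [DecidableEq V] (G : SimpleGraph V) [DecidableRel G.Adj]

noncomputable def qc (e : Sym2 V) : ℕ := {Q : Set (Sym2 V) | IsQuadrangle G Q ∧ e ∈ Q}.ncard

def Nf (v : V) : Finset V := univ.filter (fun w => G.Adj v w)

lemma mem_Nf {v w : V} : w ∈ Nf G v ↔ G.Adj v w := by simp [Nf]

def qp (u v : V) : Finset (V × V) :=
  univ.filter (fun p => G.Adj v p.1 ∧ G.Adj p.1 p.2 ∧ G.Adj p.2 u ∧ p.1 ≠ u ∧ p.2 ≠ v)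

lemma mem_qp {u v : V} {p : V × V} :
    p ∈ qp G u v ↔ G.Adj v p.1 ∧ G.Adj p.1 p.2 ∧ G.Adj p.2 u ∧ p.1 ≠ u ∧ p.2 ≠ v := by
  simp [qp]

def lamF (v x y : V) : Finset V := univ.filter (fun w => w ≠ v ∧ G.Adj x w ∧ G.Adj y w)

lemma mem_lamF {v x y w : V} : w ∈ lamF G v x y ↔ w ≠ v ∧ G.Adj x w ∧ G.Adj y w := by
  simp [lamF]

lemma lamF_comm (v x y : V) : lamF G v x y = lamF G v y x := by
  ext w; simp [lamF]; tauto

lemma qc_edge {u v : V} (h : G.Adj u v) : qc G s(u,v) = (qp G u v).card := by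
  set F : V × V → Set (Sym2 V) :=
    fun p => {s(u,v), s(v,p.1), s(p.1,p.2), s(p.2,u)} with hF
  have himg : {Q : Set (Sym2 V) | IsQuadrangle G Q ∧ s(u,v) ∈ Q} = F '' ↑(qp G u v) := by
    ext Q
    simp only [Set.mem_setOf_eq, Set.mem_image, Finset.mem_coe]
    constructor
    · rintro ⟨⟨a, b, c, d, hnd, hab, hbc, hcd, hda, rfl⟩, he⟩
      obtain ⟨n1, n2, n3, n4, n5, n6⟩ := nodup4.mp hnd
      simp only [Set.mem_insert_iff, Set.mem_singleton_iff, Sym2.eq_iff] at he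
      have swap1 : s(b,a) = s(a,b) := Sym2.eq_swap
      have swap2 : s(c,b) = s(b,c) := Sym2.eq_swap
      have swap3 : s(d,c) = s(c,d) := Sym2.eq_swap
      have swap4 : s(a,d) = s(d,a) := Sym2.eq_swap
      rcases he with (⟨rfl, rfl⟩ | ⟨rfl, rfl⟩) | (⟨rfl, rfl⟩ | ⟨rfl, rfl⟩) |
        (⟨rfl, rfl⟩ | ⟨rfl, rfl⟩) | (⟨rfl, rfl⟩ | ⟨rfl, rfl⟩)
      · refine ⟨(c, d), (mem_qp G).mpr ⟨?_, ?_, ?_, ?_, ?_⟩, ?_⟩ <;>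
          first
            | assumption
            | (apply SimpleGraph.Adj.symm; assumption)
            | (intro hh; simp_all)
            | (ext x
               simp only [hF, swap1, swap2, swap3, swap4, Set.mem_insert_iff,
                 Set.mem_singleton_iff]
               try tauto)
      · refine ⟨(d, c), (mem_qp G).mpr ⟨?_, ?_, ?_, ?_, ?_⟩, ?_⟩ <;>
          first
            | assumption
            | (apply SimpleGraph.Adj.symm; assumption)
            | (intro hh; simp_all)
            | (ext x
               simp only [hF, swap1, swap2, swap3, swap4, Set.mem_insert_iff,
                 Set.mem_singleton_iff]
               try tauto)
      · refine ⟨(d, a), (mem_qp G).mpr ⟨?_, ?_, ?_, ?_, ?_⟩, ?_⟩ <;>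
          first
            | assumption
            | (apply SimpleGraph.Adj.symm; assumption)
            | (intro hh; simp_all)
            | (ext x
               simp only [hF, swap1, swap2, swap3, swap4, Set.mem_insert_iff,
                 Set.mem_singleton_iff]
               try tauto)
      · refine ⟨(a, d), (mem_qp G).mpr ⟨?_, ?_, ?_, ?_, ?_⟩, ?_⟩ <;>
          first
            | assumption
            | (apply SimpleGraph.Adj.symm; assumption)
            | (intro hh; simp_all)
            | (ext x
               simp only [hF, swap1, swap2, swap3, swap4, Set.mem_insert_iff,
                 Set.mem_singleton_iff]
               try tauto)
      · refine ⟨(a, b), (mem_qp G).mpr ⟨?_, ?_, ?_, ?_, ?_⟩, ?_⟩ <;>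
          first
            | assumption
            | (apply SimpleGraph.Adj.symm; assumption)
            | (intro hh; simp_all)
            | (ext x
               simp only [hF, swap1, swap2, swap3, swap4, Set.mem_insert_iff,
                 Set.mem_singleton_iff]
               try tauto)
      · refine ⟨(b, a), (mem_qp G).mpr ⟨?_, ?_, ?_, ?_, ?_⟩, ?_⟩ <;>
          first
            | assumption
            | (apply SimpleGraph.Adj.symm; assumption)
            | (intro hh; simp_all)
            | (ext x
               simp only [hF, swap1, swap2, swap3, swap4, Set.mem_insert_iff,
                 Set.mem_singleton_iff]
               try tauto)
      · refine ⟨(b, c), (mem_qp G).mpr ⟨?_, ?_, ?_, ?_, ?_⟩, ?_⟩ <;>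
          first
            | assumption
            | (apply SimpleGraph.Adj.symm; assumption)
            | (intro hh; simp_all)
            | (ext x
               simp only [hF, swap1, swap2, swap3, swap4, Set.mem_insert_iff,
                 Set.mem_singleton_iff]
               try tauto)
      · refine ⟨(c, b), (mem_qp G).mpr ⟨?_, ?_, ?_, ?_, ?_⟩, ?_⟩ <;>
          first
            | assumption
            | (apply SimpleGraph.Adj.symm; assumption)
            | (intro hh; simp_all)
            | (ext x
               simp only [hF, swap1, swap2, swap3, swap4, Set.mem_insert_iff,
                 Set.mem_singleton_iff]
               try tauto)
    · rintro ⟨⟨c, d⟩, hp, rfl⟩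
      obtain ⟨h1, h2, h3, h4, h5⟩ := (mem_qp G).mp hp
      refine ⟨⟨u, v, c, d, ?_, h, h1, h2, h3, rfl⟩, by simp [hF]⟩
      exact nodup4.mpr ⟨h.ne, fun hh => h4 hh.symm, h3.ne', h1.ne, fun hh => h5 hh.symm, h2.ne⟩
  have hinj : Set.InjOn F ↑(qp G u v) := by
    rintro ⟨c, d⟩ hp ⟨c', d'⟩ hp' hFF
    obtain ⟨h1, h2, h3, h4, h5⟩ := (mem_qp G).mp hp
    obtain ⟨h1', h2', h3', h4', h5'⟩ := (mem_qp G).mp hp'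
    have hvu : v ≠ u := h.ne'
    have huv : u ≠ v := h.ne
    have hcu : c ≠ u := h4
    have hdv : d ≠ v := h5
    have hdu : d ≠ u := h3.ne
    have hvc' : v ≠ c' := h1'.ne
    have hvd' : v ≠ d' := fun hh => h5' hh.symm
    have hud' : u ≠ d' := h3'.ne'
    have huc' : u ≠ c' := fun hh => h4' hh.symm
    have hcmem : s(v, c) ∈ F (c', d') := by
      rw [← hFF]; simp [hF]
    have hdmem : s(d, u) ∈ F (c', d') := by
      rw [← hFF]; simp [hF]
    simp only [hF, Set.mem_insert_iff, Set.mem_singleton_iff, Sym2.eq_iff] at hcmem hdmem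
    have hc : c = c' := by
      rcases hcmem with (⟨h9, h10⟩ | ⟨h9, h10⟩) | (⟨h9, h10⟩ | ⟨h9, h10⟩) |
        (⟨h9, h10⟩ | ⟨h9, h10⟩) | (⟨h9, h10⟩ | ⟨h9, h10⟩) <;>
        first | assumption | (exfalso; simp_all)
    subst hc
    have hd : d = d' := by
      rcases hdmem with (⟨h9, h10⟩ | ⟨h9, h10⟩) | (⟨h9, h10⟩ | ⟨h9, h10⟩) |
        (⟨h9, h10⟩ | ⟨h9, h10⟩) | (⟨h9, h10⟩ | ⟨h9, h10⟩) <;>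
        first | assumption | (exfalso; simp_all)
    simp [hd]
  rw [qc, himg, Set.ncard_image_of_injOn hinj, Set.ncard_coe_finset]

lemma quad_image (φ : G ≃g G) {Q : Set (Sym2 V)} (hQ : IsQuadrangle G Q) :
    IsQuadrangle G (Sym2.map φ '' Q) := by
  obtain ⟨a, b, c, d, hnd, hab, hbc, hcd, hda, rfl⟩ := hQ
  obtain ⟨n1, n2, n3, n4, n5, n6⟩ := nodup4.mp hnd
  refine ⟨φ a, φ b, φ c, φ d, ?_, ?_, ?_, ?_, ?_, ?_⟩
  · exact nodup4.mpr ⟨fun hh => n1 (φ.injective hh), fun hh => n2 (φ.injective hh),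
      fun hh => n3 (φ.injective hh), fun hh => n4 (φ.injective hh),
      fun hh => n5 (φ.injective hh), fun hh => n6 (φ.injective hh)⟩
  · exact φ.map_adj_iff.mpr hab
  · exact φ.map_adj_iff.mpr hbc
  · exact φ.map_adj_iff.mpr hcd
  · exact φ.map_adj_iff.mpr hda
  · simp only [Set.image_insert_eq, Set.image_singleton, Sym2.map_pair_eq]

lemma qc_map (φ : G ≃g G) (e : Sym2 V) : qc G (Sym2.map φ e) = qc G e := by
  have hinj : Function.Injective (Sym2.map (φ : V → V)) :=
    Sym2.map.injective φ.injective
  have hset : {Q : Set (Sym2 V) | IsQuadrangle G Q ∧ Sym2.map φ e ∈ Q}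
      = (Set.image (Sym2.map (φ : V → V))) '' {Q : Set (Sym2 V) | IsQuadrangle G Q ∧ e ∈ Q} := by
    ext Q'
    simp only [Set.mem_setOf_eq, Set.mem_image]
    constructor
    · rintro ⟨hq, he⟩
      refine ⟨Sym2.map φ.symm '' Q', ⟨quad_image G φ.symm hq, ?_⟩, ?_⟩
      · refine ⟨Sym2.map φ e, he, ?_⟩
        rw [Sym2.map_map]
        rw [show ((φ.symm : V → V) ∘ (φ : V → V)) = id from funext fun w => by simp]
        rw [Sym2.map_id, id_eq]

      · have hco : (Sym2.map (φ : V → V) ∘ Sym2.map (φ.symm : V → V)) = id := by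
          funext z
          simp only [Function.comp_apply, Sym2.map_map]
          rw [show (fun x => φ (φ.symm x)) = (id : V → V) from funext fun w => by simp]
          rw [Sym2.map_id, id_eq]
        rw [← Set.image_comp, hco, Set.image_id]
    · rintro ⟨R, ⟨hq, he⟩, rfl⟩
      exact ⟨quad_image G φ hq, Set.mem_image_of_mem _ he⟩
  rw [qc, qc, hset, Set.ncard_image_of_injective _ (Set.image_injective.mpr hinj)]

noncomputable def cnt (v : V) (m : ℕ) : ℕ :=
  ((Nf G v).filter (fun w => qc G s(v,w) = m)).card

lemma cnt_const (hvt : ∀ x y : V, ∃ φ : G ≃g G, φ x = y) (u v : V) (m : ℕ) :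
    cnt G u m = cnt G v m := by
  obtain ⟨φ, hφ⟩ := hvt u v
  have key : cnt G (φ u) m = cnt G u m := by
    unfold cnt
    apply Finset.card_bij' (fun w _ => φ.symm w) (fun w _ => φ w)
    · intro w hw
      simp only [Finset.mem_filter, Nf, Finset.mem_univ, true_and] at hw ⊢
      constructor
      · have h2 := φ.symm.map_adj_iff.mpr hw.1
        simpa using h2
      · rw [← hw.2]
        rw [show s(φ u, w) = Sym2.map φ s(u, φ.symm w) by simp [Sym2.map_pair_eq], qc_map]
    · intro w hw
      simp only [Finset.mem_filter, Nf, Finset.mem_univ, true_and] at hw ⊢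
      constructor
      · exact φ.map_adj_iff.mpr hw.1
      · rw [← hw.2]
        rw [show s(φ u, φ w) = Sym2.map φ s(u, w) by simp [Sym2.map_pair_eq], qc_map]
    · intro w _; simp
    · intro w _; simp
  rw [← hφ, key]

lemma Sv_const (hvt : ∀ x y : V, ∃ φ : G ≃g G, φ x = y) (u v : V) :
    ∑ w ∈ Nf G u, qc G s(u,w) = ∑ w ∈ Nf G v, qc G s(v,w) := by
  obtain ⟨φ, hφ⟩ := hvt u v
  rw [← hφ]
  apply Finset.sum_nbij' (fun w => φ w) (fun w => φ.symm w)
  · intro w hw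
    simp only [Nf, Finset.mem_filter, Finset.mem_univ, true_and] at hw ⊢
    exact φ.map_adj_iff.mpr hw
  · intro w hw
    simp only [Nf, Finset.mem_filter, Finset.mem_univ, true_and] at hw ⊢
    have h2 := φ.symm.map_adj_iff.mpr hw
    simpa using h2
  · intro w _; simp
  · intro w _; simp
  · intro w hw
    rw [show s(φ u, φ w) = Sym2.map φ s(u, w) by simp [Sym2.map_pair_eq], qc_map]

lemma sum_pairs (f : Sym2 V → ℕ) :
    ∑ p ∈ univ.filter (fun p : V × V => G.Adj p.1 p.2), f s(p.1, p.2)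
      = ∑ v, ∑ w ∈ Nf G v, f s(v, w) := by
  rw [Finset.sum_filter, Fintype.sum_prod_type]
  simp [Nf, Finset.sum_filter]

lemma sum_pairs_edges (f : Sym2 V → ℕ) :
    ∑ p ∈ univ.filter (fun p : V × V => G.Adj p.1 p.2), f s(p.1, p.2)
      = 2 * ∑ e ∈ G.edgeFinset, f e := by
  rw [← Finset.sum_fiberwise_of_maps_to (g := fun p : V × V => s(p.1, p.2)) (t := G.edgeFinset)
    (fun p hp => by simpa [SimpleGraph.mem_edgeFinset] using (Finset.mem_filter.mp hp).2)]
  rw [Finset.mul_sum]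
  refine Finset.sum_congr rfl fun e he => ?_
  have hfib : ∀ p ∈ (univ.filter (fun p : V × V => G.Adj p.1 p.2)).filter
      (fun p => s(p.1, p.2) = e), f s(p.1, p.2) = f e := fun p hp => by
    rw [(Finset.mem_filter.mp hp).2]
  rw [Finset.sum_congr rfl hfib, Finset.sum_const, smul_eq_mul]
  have : ((univ.filter (fun p : V × V => G.Adj p.1 p.2)).filter
      (fun p => s(p.1, p.2) = e)).card = 2 := by
    induction e using Sym2.ind with
    | _ x y =>
      have hxy : G.Adj x y := by simpa [SimpleGraph.mem_edgeFinset] using he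
      have : (univ.filter (fun p : V × V => G.Adj p.1 p.2)).filter
          (fun p => s(p.1, p.2) = s(x, y)) = {(x, y), (y, x)} := by
        ext ⟨a, b⟩
        simp only [Finset.mem_filter, Finset.mem_univ, true_and, Sym2.eq_iff,
          Finset.mem_insert, Finset.mem_singleton, Prod.mk.injEq]
        constructor
        · rintro ⟨-, (⟨rfl, rfl⟩ | ⟨rfl, rfl⟩)⟩ <;> simp
        · rintro (⟨rfl, rfl⟩ | ⟨rfl, rfl⟩) <;> exact ⟨by simp [hxy, hxy.symm], by simp⟩
      have hne : ((x, y) : V × V) ≠ (y, x) := by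
        simp only [ne_eq, Prod.mk.injEq, not_and]
        intro h _
        exact hxy.ne h
      rw [this, Finset.card_pair hne]
  rw [this]

lemma qp_split (u v : V) :
    (qp G u v).card = ∑ c ∈ (Nf G v).erase u, (lamF G v u c).card := by
  rw [Finset.card_eq_sum_card_fiberwise (f := Prod.fst) (t := (Nf G v).erase u)
    (fun p hp => by
      simp only [qp, Finset.mem_filter, Finset.mem_univ, true_and] at hp
      simp only [Finset.mem_erase, Nf, Finset.mem_filter, Finset.mem_univ, true_and]
      exact Finset.mem_erase.mpr ⟨((mem_qp G).mp hp).2.2.2.1, (mem_Nf G).mpr ((mem_qp G).mp hp).1⟩)]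
  refine Finset.sum_congr rfl fun c hc => ?_
  simp only [Finset.mem_erase, Nf, Finset.mem_filter, Finset.mem_univ, true_and] at hc
  apply Finset.card_bij (fun p _ => p.2)
  · intro p hp
    simp only [Finset.mem_filter, qp, Finset.mem_univ, true_and] at hp
    obtain ⟨⟨h1, h2, h3, h4, h5⟩, h6⟩ := hp
    simp only [lamF, Finset.mem_filter, Finset.mem_univ, true_and]
    exact ⟨h5, h3.symm, h6 ▸ h2⟩
  · intro p hp p' hp' hpp
    simp only [Finset.mem_filter] at hp hp'
    exact Prod.ext (hp.2.trans hp'.2.symm) hpp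
  · intro d hd
    simp only [lamF, Finset.mem_filter, Finset.mem_univ, true_and] at hd
    refine ⟨(c, d), ?_, rfl⟩
    simp only [Finset.mem_filter, qp, Finset.mem_univ, true_and]
    exact ⟨⟨hc.2, hd.2.2, hd.2.1.symm, hc.1, hd.1⟩, trivial⟩

lemma Nf_card (hreg : ∀ v : V, (G.neighborSet v).ncard = 4) (v : V) : (Nf G v).card = 4 := by
  have h := hreg v
  rw [show G.neighborSet v = ↑(Nf G v) by ext w; simp [Nf, SimpleGraph.mem_neighborSet],
    Set.ncard_coe_finset] at h
  exact h

open Classical in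
noncomputable def Qt : Finset (Set (Sym2 V)) := univ.filter (fun Q => IsQuadrangle G Q)

open Classical in
lemma qc_eq_card (e : Sym2 V) : qc G e = ((Qt G).filter (fun Q => e ∈ Q)).card := by
  rw [qc, show {Q : Set (Sym2 V) | IsQuadrangle G Q ∧ e ∈ Q}
      = ↑((Qt G).filter (fun Q => e ∈ Q)) by
    ext Q; simp [Qt], Set.ncard_coe_finset]

lemma quad_sum {Q : Set (Sym2 V)} [DecidablePred (fun e : Sym2 V => e ∈ Q)]
    (hQ : IsQuadrangle G Q) :
    ∑ e ∈ G.edgeFinset, (if e ∈ Q then 1 else 0) = 4 := by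
  obtain ⟨a, b, c, d, hnd, hab, hbc, hcd, hda, rfl⟩ := hQ
  obtain ⟨n1, n2, n3, n4, n5, n6⟩ := nodup4.mp hnd
  rw [← Finset.sum_subset (s₁ := ({s(a,b), s(b,c), s(c,d), s(d,a)} : Finset (Sym2 V)))
    (by intro x hx
        simp only [Finset.mem_insert, Finset.mem_singleton] at hx
        rcases hx with rfl | rfl | rfl | rfl <;>
          simp [SimpleGraph.mem_edgeFinset, hab, hbc, hcd, hda])
    (by intro x _ hx
        simp only [Finset.mem_insert, Finset.mem_singleton] at hx
        have : x ∉ ({s(a,b), s(b,c), s(c,d), s(d,a)} : Set (Sym2 V)) := by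
          simp only [Set.mem_insert_iff, Set.mem_singleton_iff]; tauto
        simp [this])]
  have hall : ∀ x ∈ ({s(a,b), s(b,c), s(c,d), s(d,a)} : Finset (Sym2 V)),
      (if x ∈ ({s(a,b), s(b,c), s(c,d), s(d,a)} : Set (Sym2 V)) then 1 else 0) = 1 := by
    intro x hx
    simp only [Finset.mem_insert, Finset.mem_singleton] at hx
    have : x ∈ ({s(a,b), s(b,c), s(c,d), s(d,a)} : Set (Sym2 V)) := by
      simp only [Set.mem_insert_iff, Set.mem_singleton_iff]; tauto
    simp [this]
  rw [Finset.sum_congr rfl hall, Finset.sum_const, smul_eq_mul, mul_one]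
  rw [Finset.card_insert_of_notMem (by simp [Sym2.eq_iff]; tauto),
    Finset.card_insert_of_notMem (by simp [Sym2.eq_iff]; tauto),
    Finset.card_pair (by simp [Sym2.eq_iff]; tauto)]

open Classical in
lemma sum_qc : ∑ e ∈ G.edgeFinset, qc G e = 4 * (Qt G).card := by
  have h : ∀ e ∈ G.edgeFinset, qc G e = ∑ Q ∈ Qt G, (if e ∈ Q then 1 else 0) := by
    intro e _
    rw [qc_eq_card, Finset.card_filter]
  rw [Finset.sum_congr rfl h, Finset.sum_comm]
  have h2 : ∀ Q ∈ Qt G, ∑ e ∈ G.edgeFinset, (if e ∈ Q then 1 else 0) = 4 := by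
    intro Q hQ
    exact quad_sum G (by simpa [Qt] using hQ)
  rw [Finset.sum_congr rfl h2, Finset.sum_const, smul_eq_mul, mul_comm]

lemma exists_quad (hg : G.girth = 4) : ∃ a b : V, G.Adj a b ∧ 1 ≤ qc G s(a,b) := by
  have hnac : ¬ G.IsAcyclic := by
    intro hac
    rw [hac.girth_eq_zero] at hg
    omega
  obtain ⟨a, w, hcyc, hlen⟩ := (SimpleGraph.exists_girth_eq_length (G := G)).mpr hnac
  rw [hg] at hlen
  cases w with
  | nil => simp at hlen
  | cons h1 w =>
    cases w with
    | nil => simp at hlen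
    | cons h2 w =>
      cases w with
      | nil => simp at hlen
      | cons h3 w =>
        cases w with
        | nil => simp at hlen
        | cons h4 w =>
          cases w with
          | cons h5 w => simp [SimpleGraph.Walk.length_cons] at hlen
          | nil =>
            rename_i b c d
            have hsup := hcyc.support_nodup
            simp only [SimpleGraph.Walk.support_cons, SimpleGraph.Walk.support_nil,
              List.tail_cons, List.nodup_cons, List.mem_cons, List.not_mem_nil,
              List.mem_singleton, List.nodup_nil] at hsup
            refine ⟨a, b, h1, ?_⟩
            rw [qc_edge G h1]
            refine Finset.card_pos.mpr ⟨(c, d), ?_⟩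
            simp only [qp, Finset.mem_filter, Finset.mem_univ, true_and]
            refine ⟨h2, h3, h4, ?_, ?_⟩ <;> tauto

lemma cnt_even (hvt : ∀ x y : V, ∃ φ : G ≃g G, φ x = y) (hodd : Odd (Fintype.card V))
    (v : V) (m : ℕ) : Even (cnt G v m) := by
  classical
  have h1 : ∑ u : V, cnt G u m
      = 2 * ∑ e ∈ G.edgeFinset, (if qc G e = m then 1 else 0) := by
    have hB := sum_pairs_edges G (fun e => if qc G e = m then 1 else 0)
    have hA := sum_pairs G (fun e => if qc G e = m then 1 else 0)
    rw [← hB, hA]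
    refine Finset.sum_congr rfl fun u _ => ?_
    rw [cnt, Finset.card_filter]
  have h2 : ∑ u : V, cnt G u m = Fintype.card V * cnt G v m := by
    rw [Finset.sum_congr rfl (fun u _ => cnt_const G hvt u v m), Finset.sum_const,
      smul_eq_mul, Finset.card_univ]
  have h3 : Even (Fintype.card V * cnt G v m) := by
    rw [← h2, h1]
    exact ⟨_, by ring⟩
  rcases Nat.even_mul.mp h3 with h | h
  · exact absurd h (Nat.not_even_iff_odd.mpr hodd)
  · exact h

end QuadAux

theorem QuadAux.main {V : Type*} [Fintype V] (G : SimpleGraph V)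
    (hconn : G.Connected)
    (hvt : ∀ x y : V, ∃ φ : G ≃g G, φ x = y)
    (hodd : Odd (Fintype.card V))
    (hreg : ∀ v : V, (G.neighborSet v).ncard = 4)
    (hgirth : G.girth = 4) :
    ∀ e ∈ G.edgeSet, 2 ≤ QuadAux.qc G e ∧
      ∃ e' ∈ G.edgeSet, e' ≠ e ∧ (∃ x : V, x ∈ e' ∧ x ∈ e) ∧ QuadAux.qc G e' = QuadAux.qc G e := by
  classical
  intro e he
  induction e using Sym2.ind with
  | _ u w =>
  have hadj : G.Adj u w := he
  constructor
  · -- PART 1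
    by_contra hlt
    push_neg at hlt
    set a := QuadAux.qc G s(u, w) with ha_def
    have ha : a ≤ 1 := by omega
    have hq1 : QuadAux.qc G s(u, w) = a := rfl
    -- find second neighbor with value a
    have hwmem : w ∈ (QuadAux.Nf G u).filter (fun z => QuadAux.qc G s(u, z) = a) := by
      simp [QuadAux.mem_Nf, hadj, hq1]
    have hcard2 : 1 < ((QuadAux.Nf G u).filter (fun z => QuadAux.qc G s(u, z) = a)).card := by
      obtain ⟨k, hk⟩ := QuadAux.cnt_even G hvt hodd u a
      have h1 : 1 ≤ ((QuadAux.Nf G u).filter (fun z => QuadAux.qc G s(u, z) = a)).card :=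
        Finset.card_pos.mpr ⟨w, hwmem⟩
      have : QuadAux.cnt G u a = ((QuadAux.Nf G u).filter (fun z => QuadAux.qc G s(u, z) = a)).card := rfl
      rw [this] at hk
      omega
    obtain ⟨y2, hy2f, hy2w⟩ := Finset.exists_mem_ne hcard2 w
    simp only [Finset.mem_filter] at hy2f
    have hy2adj : G.Adj u y2 := QuadAux.mem_Nf G |>.mp hy2f.1
    have hq2 : QuadAux.qc G s(u, y2) = a := hy2f.2
    -- decompose neighborhood
    have hN4 : (QuadAux.Nf G u).card = 4 := QuadAux.Nf_card G hreg u
    have hsub : {w, y2} ⊆ QuadAux.Nf G u := by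
      intro z hz
      simp only [Finset.mem_insert, Finset.mem_singleton] at hz
      rcases hz with rfl | rfl
      · exact (QuadAux.mem_Nf G).mpr hadj
      · exact (QuadAux.mem_Nf G).mpr hy2adj
    have hsd : (QuadAux.Nf G u \ {w, y2}).card = 2 := by
      rw [Finset.card_sdiff_of_subset hsub, hN4, Finset.card_pair (Ne.symm hy2w)]
    obtain ⟨x1, x2, hx12, hsd2⟩ := Finset.card_eq_two.mp hsd
    have hx1m : x1 ∈ QuadAux.Nf G u \ {w, y2} := by rw [hsd2]; simp
    have hx2m : x2 ∈ QuadAux.Nf G u \ {w, y2} := by rw [hsd2]; simp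
    simp only [Finset.mem_sdiff, Finset.mem_insert, Finset.mem_singleton, not_or] at hx1m hx2m
    have hx1adj : G.Adj u x1 := (QuadAux.mem_Nf G).mp hx1m.1
    have hx2adj : G.Adj u x2 := (QuadAux.mem_Nf G).mp hx2m.1
    have hx1w : x1 ≠ w := hx1m.2.1
    have hx1y2 : x1 ≠ y2 := hx1m.2.2
    have hx2w : x2 ≠ w := hx2m.2.1
    have hx2y2 : x2 ≠ y2 := hx2m.2.2
    have hNf : QuadAux.Nf G u = {w, y2, x1, x2} := by
      apply Finset.eq_of_subset_of_card_le
      · intro z hz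
        by_cases hz2 : z ∈ ({w, y2} : Finset V)
        · simp only [Finset.mem_insert, Finset.mem_singleton] at hz2
          simp only [Finset.mem_insert, Finset.mem_singleton]
          tauto
        · have : z ∈ QuadAux.Nf G u \ {w, y2} := Finset.mem_sdiff.mpr ⟨hz, hz2⟩
          rw [hsd2] at this
          simp only [Finset.mem_insert, Finset.mem_singleton] at this
          simp only [Finset.mem_insert, Finset.mem_singleton]
          tauto
      · rw [hN4]
        apply le_trans (Finset.card_insert_le _ _)
        have h1 : ({y2, x1, x2} : Finset V).card ≤ 3 := by
          apply le_trans (Finset.card_insert_le _ _)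
          have := Finset.card_insert_le x1 ({x2} : Finset V)
          simp at this ⊢
          omega
        omega
    set b1 := QuadAux.qc G s(u, x1) with hb1_def
    set b2 := QuadAux.qc G s(u, x2) with hb2_def
    -- QuadAux.cnt formula
    have hcnt : ∀ m : ℕ, QuadAux.cnt G u m =
        (if a = m then 1 else 0) + ((if QuadAux.qc G s(u, y2) = m then 1 else 0) +
        ((if b1 = m then 1 else 0) + (if b2 = m then 1 else 0))) := by
      intro m
      rw [QuadAux.cnt, hNf, Finset.card_filter,
        Finset.sum_insert (by simp [Ne.symm hy2w, Ne.symm hx1w, Ne.symm hx2w]),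
        Finset.sum_insert (by simp [Ne.symm hx1y2, Ne.symm hx2y2]),
        Finset.sum_insert (by simp [hx12]), Finset.sum_singleton]
    -- b1 = b2
    have hbb : b1 = b2 := by
      by_contra hb
      have e1 := QuadAux.cnt_even G hvt hodd u b1
      have e2 := QuadAux.cnt_even G hvt hodd u b2
      rw [hcnt b1, hq2] at e1
      rw [hcnt b2, hq2] at e2
      rw [Nat.even_iff] at e1 e2
      by_cases h1 : a = b1 <;> by_cases h2 : a = b2 <;>
        simp [h1, h2, hb, Ne.symm hb] at e1 e2 <;> omega
    -- erase sets
    have her1 : (QuadAux.Nf G u).erase w = {y2, x1, x2} := by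
      rw [hNf]
      ext z
      simp only [Finset.mem_erase, Finset.mem_insert, Finset.mem_singleton]
      constructor
      · rintro ⟨hne, rfl | rfl | rfl | rfl⟩ <;> tauto
      · rintro (rfl | rfl | rfl) <;> exact ⟨by tauto, by tauto⟩
    have her2 : (QuadAux.Nf G u).erase y2 = {w, x1, x2} := by
      rw [hNf]
      ext z
      simp only [Finset.mem_erase, Finset.mem_insert, Finset.mem_singleton]
      constructor
      · rintro ⟨hne, rfl | rfl | rfl | rfl⟩ <;> tauto
      · rintro (rfl | rfl | rfl) <;> exact ⟨by tauto, by tauto⟩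
    have her3 : (QuadAux.Nf G u).erase x1 = {w, y2, x2} := by
      rw [hNf]
      ext z
      simp only [Finset.mem_erase, Finset.mem_insert, Finset.mem_singleton]
      constructor
      · rintro ⟨hne, rfl | rfl | rfl | rfl⟩ <;> tauto
      · rintro (rfl | rfl | rfl) <;> exact ⟨by tauto, by tauto⟩
    have her4 : (QuadAux.Nf G u).erase x2 = {w, y2, x1} := by
      rw [hNf]
      ext z
      simp only [Finset.mem_erase, Finset.mem_insert, Finset.mem_singleton]
      constructor
      · rintro ⟨hne, rfl | rfl | rfl | rfl⟩ <;> tauto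
      · rintro (rfl | rfl | rfl) <;> exact ⟨by tauto, by tauto⟩
    -- KL equations
    have hE1 : a = (QuadAux.lamF G u w y2).card + ((QuadAux.lamF G u w x1).card + (QuadAux.lamF G u w x2).card) := by
      calc a = QuadAux.qc G s(w, u) := by rw [Sym2.eq_swap]
        _ = (QuadAux.qp G w u).card := QuadAux.qc_edge G hadj.symm
        _ = ∑ c ∈ (QuadAux.Nf G u).erase w, (QuadAux.lamF G u w c).card := QuadAux.qp_split G w u
        _ = _ := by
          rw [her1, Finset.sum_insert (by simp [hx1y2, hx2y2] <;> tauto),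
            Finset.sum_insert (by simp [hx12]), Finset.sum_singleton]
    have hE2 : a = (QuadAux.lamF G u w y2).card + ((QuadAux.lamF G u y2 x1).card + (QuadAux.lamF G u y2 x2).card) := by
      calc a = QuadAux.qc G s(y2, u) := by rw [Sym2.eq_swap, hq2]
        _ = (QuadAux.qp G y2 u).card := QuadAux.qc_edge G hy2adj.symm
        _ = ∑ c ∈ (QuadAux.Nf G u).erase y2, (QuadAux.lamF G u y2 c).card := QuadAux.qp_split G y2 u
        _ = _ := by
          rw [her2, Finset.sum_insert (by simp [hx1w, hx2w] <;> tauto),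
            Finset.sum_insert (by simp [hx12]), Finset.sum_singleton,
            QuadAux.lamF_comm G u y2 w]
    have hE3 : b1 = (QuadAux.lamF G u w x1).card + ((QuadAux.lamF G u y2 x1).card + (QuadAux.lamF G u x1 x2).card) := by
      calc b1 = QuadAux.qc G s(x1, u) := by rw [Sym2.eq_swap]
        _ = (QuadAux.qp G x1 u).card := QuadAux.qc_edge G hx1adj.symm
        _ = ∑ c ∈ (QuadAux.Nf G u).erase x1, (QuadAux.lamF G u x1 c).card := QuadAux.qp_split G x1 u
        _ = _ := by
          rw [her3, Finset.sum_insert (by simp [hy2w, hx2w, hx2y2] <;> tauto),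
            Finset.sum_insert (by simp [hx2y2] <;> tauto), Finset.sum_singleton,
            QuadAux.lamF_comm G u x1 w, QuadAux.lamF_comm G u x1 y2]
    have hE4 : b2 = (QuadAux.lamF G u w x2).card + ((QuadAux.lamF G u y2 x2).card + (QuadAux.lamF G u x1 x2).card) := by
      calc b2 = QuadAux.qc G s(x2, u) := by rw [Sym2.eq_swap]
        _ = (QuadAux.qp G x2 u).card := QuadAux.qc_edge G hx2adj.symm
        _ = ∑ c ∈ (QuadAux.Nf G u).erase x2, (QuadAux.lamF G u x2 c).card := QuadAux.qp_split G x2 u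
        _ = _ := by
          rw [her4, Finset.sum_insert (by simp [hy2w, hx1w, hx1y2] <;> tauto),
            Finset.sum_insert (by simp [hx1y2] <;> tauto), Finset.sum_singleton,
            QuadAux.lamF_comm G u x2 w, QuadAux.lamF_comm G u x2 y2, QuadAux.lamF_comm G u x2 x1]
    -- r ≤ 3
    have hr3 : (QuadAux.lamF G u x1 x2).card ≤ 3 := by
      have hsub2 : QuadAux.lamF G u x1 x2 ⊆ (QuadAux.Nf G x1).erase u := by
        intro z hz
        obtain ⟨hz1, hz2, hz3⟩ := (QuadAux.mem_lamF G).mp hz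
        exact Finset.mem_erase.mpr ⟨hz1, (QuadAux.mem_Nf G).mpr hz2⟩
      calc (QuadAux.lamF G u x1 x2).card ≤ ((QuadAux.Nf G x1).erase u).card := Finset.card_le_card hsub2
        _ = (QuadAux.Nf G x1).card - 1 := Finset.card_erase_of_mem ((QuadAux.mem_Nf G).mpr hx1adj.symm)
        _ = 3 := by rw [QuadAux.Nf_card G hreg x1]
    -- divisibility
    have hSv : ∑ z ∈ QuadAux.Nf G u, QuadAux.qc G s(u, z) = a + (a + (b1 + b2)) := by
      rw [hNf, Finset.sum_insert (by simp [Ne.symm hy2w, Ne.symm hx1w, Ne.symm hx2w]),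
        Finset.sum_insert (by simp [Ne.symm hx1y2, Ne.symm hx2y2]),
        Finset.sum_insert (by simp [hx12]), Finset.sum_singleton, hq2]
    have hglob : Fintype.card V * (a + (a + (b1 + b2))) = 2 * (4 * (QuadAux.Qt G).card) := by
      rw [← QuadAux.sum_qc G, ← QuadAux.sum_pairs_edges G (QuadAux.qc G), QuadAux.sum_pairs G (QuadAux.qc G)]
      rw [Finset.sum_congr rfl (fun z _ => (QuadAux.Sv_const G hvt z u).trans hSv),
        Finset.sum_const, smul_eq_mul, Finset.card_univ]
    have hdvd : 4 ∣ a + b1 := by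
      have h8 : Fintype.card V * (2 * (a + b1)) = 2 * (4 * (QuadAux.Qt G).card) := by
        rw [← hglob, hbb]; ring
      have h8' : 2 * (Fintype.card V * (a + b1)) = 2 * (4 * (QuadAux.Qt G).card) := by
        rw [← h8]; ring
      have h4 : Fintype.card V * (a + b1) = 4 * (QuadAux.Qt G).card := by omega
      have hcop2 : Nat.Coprime 2 (Fintype.card V) := Nat.coprime_two_left.mpr hodd
      have hcop4 : Nat.Coprime 4 (Fintype.card V) := by
        have := Nat.Coprime.mul hcop2 hcop2
        norm_num at this
        exact this
      exact (Nat.Coprime.dvd_of_dvd_mul_left hcop4 ⟨(QuadAux.Qt G).card, h4⟩)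
    -- case split
    by_cases ha0 : a = 0
    · -- a = 0 case
      have hz : (QuadAux.lamF G u w x1).card = 0 ∧ (QuadAux.lamF G u w x2).card = 0 ∧
          (QuadAux.lamF G u y2 x1).card = 0 ∧ (QuadAux.lamF G u y2 x2).card = 0 := by omega
      have hb10 : b1 = 0 := by omega
      -- all neighbors have QuadAux.qc = 0
      obtain ⟨a0, b0, hab0, hqc0⟩ := QuadAux.exists_quad G hgirth
      have hcu : QuadAux.cnt G u 0 = 4 := by
        rw [hcnt 0]
        simp [ha0, hq2, hb10, ← hbb]
      have hca0 : QuadAux.cnt G a0 0 ≤ 3 := by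
        have hsub3 : (QuadAux.Nf G a0).filter (fun z => QuadAux.qc G s(a0, z) = 0) ⊆ (QuadAux.Nf G a0).erase b0 := by
          intro z hz
          simp only [Finset.mem_filter] at hz
          refine Finset.mem_erase.mpr ⟨?_, hz.1⟩
          rintro rfl
          omega
        calc QuadAux.cnt G a0 0 ≤ ((QuadAux.Nf G a0).erase b0).card := Finset.card_le_card hsub3
          _ = (QuadAux.Nf G a0).card - 1 := Finset.card_erase_of_mem ((QuadAux.mem_Nf G).mpr hab0)
          _ = 3 := by rw [QuadAux.Nf_card G hreg a0]
      have := QuadAux.cnt_const G hvt u a0 0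
      omega
    · -- a = 1 case
      have ha1 : a = 1 := by omega
      have hkey : b1 = 3 ∧ 2 ≤ (QuadAux.lamF G u x1 x2).card := by
        obtain ⟨t, ht⟩ := hdvd
        omega
      obtain ⟨s, hsmem, s', hs'mem, hss'⟩ := Finset.one_lt_card.mp (by omega :
        1 < (QuadAux.lamF G u x1 x2).card)
      obtain ⟨hsu, hsx1, hsx2⟩ := (QuadAux.mem_lamF G).mp hsmem
      obtain ⟨hs'u, hs'x1, hs'x2⟩ := (QuadAux.mem_lamF G).mp hs'mem
      -- QuadAux.qc of edge x1-u is 3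
      have hqx1u : QuadAux.qc G s(x1, u) = 3 := by rw [Sym2.eq_swap, ← hb1_def, hkey.1]
      -- QuadAux.qc s(s,x1) ≥ 2
      have hqs : 2 ≤ QuadAux.qc G s(s, x1) := by
        rw [QuadAux.qc_edge G hsx1.symm]
        have hsub4 : ({(u, x2), (s', x2)} : Finset (V × V)) ⊆ QuadAux.qp G s x1 := by
          intro p hp
          simp only [Finset.mem_insert, Finset.mem_singleton] at hp
          rcases hp with rfl | rfl
          · exact (QuadAux.mem_qp G).mpr ⟨hx1adj.symm, hx2adj, hsx2, Ne.symm hsu, Ne.symm hx12⟩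
          · exact (QuadAux.mem_qp G).mpr ⟨hs'x1, hs'x2.symm, hsx2, Ne.symm hss', Ne.symm hx12⟩
        calc 2 = ({(u, x2), (s', x2)} : Finset (V × V)).card := by
              rw [Finset.card_pair (by simp; exact fun hh => (Ne.symm hs'u) hh)]
          _ ≤ (QuadAux.qp G s x1).card := Finset.card_le_card hsub4
      have hqs' : 2 ≤ QuadAux.qc G s(s', x1) := by
        rw [QuadAux.qc_edge G hs'x1.symm]
        have hsub5 : ({(u, x2), (s, x2)} : Finset (V × V)) ⊆ QuadAux.qp G s' x1 := by
          intro p hp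
          simp only [Finset.mem_insert, Finset.mem_singleton] at hp
          rcases hp with rfl | rfl
          · exact (QuadAux.mem_qp G).mpr ⟨hx1adj.symm, hx2adj, hs'x2, Ne.symm hs'u, Ne.symm hx12⟩
          · exact (QuadAux.mem_qp G).mpr ⟨hsx1, hsx2.symm, hs'x2, hss', Ne.symm hx12⟩
        calc 2 = ({(u, x2), (s, x2)} : Finset (V × V)).card := by
              rw [Finset.card_pair (by simp; exact fun hh => (Ne.symm hsu) hh)]
          _ ≤ (QuadAux.qp G s' x1).card := Finset.card_le_card hsub5
      -- QuadAux.cnt u 1 = 2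
      have hcu1 : QuadAux.cnt G u 1 = 2 := by
        rw [hcnt 1]
        simp [ha1, hq2, hkey.1, ← hbb]
      -- QuadAux.cnt x1 1 ≤ 1
      have hcx1 : QuadAux.cnt G x1 1 ≤ 1 := by
        have hsub6 : (QuadAux.Nf G x1).filter (fun z => QuadAux.qc G s(x1, z) = 1)
            ⊆ (QuadAux.Nf G x1) \ {u, s, s'} := by
          intro z hz
          simp only [Finset.mem_filter] at hz
          refine Finset.mem_sdiff.mpr ⟨hz.1, ?_⟩
          simp only [Finset.mem_insert, Finset.mem_singleton, not_or]
          refine ⟨?_, ?_, ?_⟩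
          · rintro rfl; rw [hqx1u] at hz; omega
          · rintro rfl
            have : QuadAux.qc G s(x1, z) = QuadAux.qc G s(z, x1) := by rw [Sym2.eq_swap]
            rw [this] at hz; omega
          · rintro rfl
            have : QuadAux.qc G s(x1, z) = QuadAux.qc G s(z, x1) := by rw [Sym2.eq_swap]
            rw [this] at hz; omega
        have hsub7 : ({u, s, s'} : Finset V) ⊆ QuadAux.Nf G x1 := by
          intro z hz
          simp only [Finset.mem_insert, Finset.mem_singleton] at hz
          rcases hz with rfl | rfl | rfl
          · exact (QuadAux.mem_Nf G).mpr hx1adj.symm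
          · exact (QuadAux.mem_Nf G).mpr hsx1
          · exact (QuadAux.mem_Nf G).mpr hs'x1
        have hc3 : ({u, s, s'} : Finset V).card = 3 := by
          rw [Finset.card_insert_of_notMem (by simp [Ne.symm hsu, Ne.symm hs'u]),
            Finset.card_pair hss']
        calc QuadAux.cnt G x1 1 ≤ ((QuadAux.Nf G x1) \ {u, s, s'}).card := Finset.card_le_card hsub6
          _ = (QuadAux.Nf G x1).card - 3 := by rw [Finset.card_sdiff_of_subset hsub7, hc3]
          _ = 1 := by rw [QuadAux.Nf_card G hreg x1]
      have := QuadAux.cnt_const G hvt u x1 1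
      omega
  · -- PART 2
    set m := QuadAux.qc G s(u, w) with hm_def
    have hwmem : w ∈ (QuadAux.Nf G u).filter (fun z => QuadAux.qc G s(u, z) = m) := by
      simp [QuadAux.mem_Nf, hadj, hm_def]
    have hcard2 : 1 < ((QuadAux.Nf G u).filter (fun z => QuadAux.qc G s(u, z) = m)).card := by
      obtain ⟨k, hk⟩ := QuadAux.cnt_even G hvt hodd u m
      have h1 : 1 ≤ ((QuadAux.Nf G u).filter (fun z => QuadAux.qc G s(u, z) = m)).card :=
        Finset.card_pos.mpr ⟨w, hwmem⟩
      have : QuadAux.cnt G u m = ((QuadAux.Nf G u).filter (fun z => QuadAux.qc G s(u, z) = m)).card := rfl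
      rw [this] at hk
      omega
    obtain ⟨w', hw'f, hw'w⟩ := Finset.exists_mem_ne hcard2 w
    simp only [Finset.mem_filter] at hw'f
    have hw'adj : G.Adj u w' := (QuadAux.mem_Nf G).mp hw'f.1
    refine ⟨s(u, w'), hw'adj, ?_, ⟨u, by simp, by simp⟩, hw'f.2⟩
    intro hcontra
    rw [Sym2.eq_iff] at hcontra
    rcases hcontra with ⟨-, h⟩ | ⟨h1, -⟩
    · exact hw'w h
    · exact hadj.ne h1

/-- In a connected vertex-transitive odd graph with degree 4 and girth 4, every edge `e` lies
in at least two quadrangles, and some edge `e'` adjacent to `e` lies in exactly as many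
quadrangles as `e`. -/
theorem quadrangles_on_edges {V : Type*} [Fintype V] (G : SimpleGraph V)
    (hconn : G.Connected)
    (hvt : ∀ x y : V, ∃ φ : G ≃g G, φ x = y)
    (hodd : Odd (Fintype.card V))
    (hreg : ∀ v : V, (G.neighborSet v).ncard = 4)
    (hgirth : G.girth = 4) :
    ∀ e ∈ G.edgeSet,
      2 ≤ {Q : Set (Sym2 V) | IsQuadrangle G Q ∧ e ∈ Q}.ncard ∧
      ∃ e' ∈ G.edgeSet, e' ≠ e ∧ (∃ x : V, x ∈ e' ∧ x ∈ e) ∧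
        {Q : Set (Sym2 V) | IsQuadrangle G Q ∧ e' ∈ Q}.ncard =
          {Q : Set (Sym2 V) | IsQuadrangle G Q ∧ e ∈ Q}.ncard := by
  intro e he
  obtain ⟨h1, e', he', hne, hx, heq⟩ := QuadAux.main G hconn hvt hodd hreg hgirth e he
  exact ⟨h1, e', he', hne, hx, heq⟩
end

section
/- Let G be a simple connected vertex-transitive graph of odd order with even vertex degree k ≥ 4. Then G is super edge-connected: every edge-cut of G of minimum cardinality is the set ∇(v) of edges incident with some single vertex v of G. -/
open SimpleGraph Finset

/-- An edge-cut of a connected graph: a set of edges whose removal disconnects the graph. -/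
def IsEdgeCut {V : Type*} (G : SimpleGraph V) (F : Set (Sym2 V)) : Prop :=
  F ⊆ G.edgeSet ∧ ¬ (G.deleteEdges F).Connected

section Aux

variable {V : Type*} [Fintype V] [DecidableEq V] (G : SimpleGraph V) [DecidableRel G.Adj]

/-- number of (ordered) edges from S to its complement -/
def dd (S : Finset V) : ℕ :=
  ∑ a, ∑ b, if G.Adj a b ∧ a ∈ S ∧ b ∉ S then 1 else 0

/-- set of edges crossing S -/
def cutEdges (S : Finset V) : Set (Sym2 V) :=
  {e | ∃ a b, G.Adj a b ∧ a ∈ S ∧ b ∉ S ∧ e = s(a, b)}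

variable {G}

lemma cutEdges_compl (S : Finset V) : cutEdges G Sᶜ = cutEdges G S := by
  ext e
  constructor
  · rintro ⟨a, b, hab, ha, hb, rfl⟩
    exact ⟨b, a, hab.symm, by simpa using hb, by simpa using ha, Sym2.eq_swap⟩
  · rintro ⟨a, b, hab, ha, hb, rfl⟩
    exact ⟨b, a, hab.symm, by simpa using hb, by simpa using ha, Sym2.eq_swap⟩

lemma cutEdges_ncard (S : Finset V) : (cutEdges G S).ncard = dd G S := by
  classical
  have hdd : dd G S =
      (Finset.univ.filter fun p : V × V => G.Adj p.1 p.2 ∧ p.1 ∈ S ∧ p.2 ∉ S).card := by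
    rw [Finset.card_filter, Fintype.sum_prod_type]
    rfl
  have hset : cutEdges G S =
      ↑((Finset.univ.filter fun p : V × V => G.Adj p.1 p.2 ∧ p.1 ∈ S ∧ p.2 ∉ S).image
        fun p => s(p.1, p.2)) := by
    ext e
    simp only [Finset.coe_image, Set.mem_image, Finset.mem_coe, Finset.mem_filter,
      Finset.mem_univ, true_and]
    constructor
    · rintro ⟨a, b, hab, ha, hb, rfl⟩
      exact ⟨(a, b), ⟨hab, ha, hb⟩, rfl⟩
    · rintro ⟨⟨a, b⟩, ⟨hab, ha, hb⟩, rfl⟩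
      exact ⟨a, b, hab, ha, hb, rfl⟩
  rw [hset, Set.ncard_coe_finset, Finset.card_image_of_injOn, hdd]
  rintro ⟨a, b⟩ h1 ⟨c, d⟩ h2 he
  simp only [Finset.coe_filter, Set.mem_setOf_eq, Finset.mem_univ, true_and] at h1 h2
  simp only [Sym2.eq, Sym2.rel_iff', Prod.mk.injEq, Prod.swap_prod_mk] at he
  rcases he with ⟨rfl, rfl⟩ | ⟨rfl, rfl⟩
  · rfl
  · exact absurd h1.2.1 h2.2.2

lemma reach_side {S : Finset V} {a b : V}
    (h : (G.deleteEdges (cutEdges G S)).Reachable a b) : (a ∈ S ↔ b ∈ S) := by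
  obtain ⟨w⟩ := h
  induction w with
  | nil => exact Iff.rfl
  | @cons u v c h p ih =>
    have hadj : G.Adj u v ∧ s(u, v) ∉ cutEdges G S := SimpleGraph.deleteEdges_adj.1 h
    have huv : u ∈ S ↔ v ∈ S := by
      constructor
      · intro hu
        by_contra hv
        exact hadj.2 ⟨u, v, hadj.1, hu, hv, rfl⟩
      · intro hv
        by_contra hu
        exact hadj.2 ⟨v, u, hadj.1.symm, hv, hu, Sym2.eq_swap⟩
    exact huv.trans ih

lemma isEdgeCut_cutEdges {S : Finset V} (hS : S.Nonempty) (hS' : Sᶜ.Nonempty) :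
    IsEdgeCut G (cutEdges G S) := by
  constructor
  · rintro e ⟨a, b, hab, _, _, rfl⟩
    exact hab
  · intro hc
    obtain ⟨x, hx⟩ := hS
    obtain ⟨y, hy⟩ := hS'
    rw [Finset.mem_compl] at hy
    exact hy ((reach_side (hc.preconnected x y)).1 hx)

lemma exists_side {F : Set (Sym2 V)} (hF : ¬ (G.deleteEdges F).Connected)
    (hne : Nonempty V) :
    ∃ S : Finset V, S.Nonempty ∧ Sᶜ.Nonempty ∧ cutEdges G S ⊆ F := by
  classical
  have hpre : ¬ (G.deleteEdges F).Preconnected := fun h => hF (SimpleGraph.Connected.mk h)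
  rw [SimpleGraph.Preconnected] at hpre
  push_neg at hpre
  obtain ⟨x, y, hxy⟩ := hpre
  refine ⟨Finset.univ.filter fun a => (G.deleteEdges F).Reachable x a,
    ⟨x, Finset.mem_filter.2 ⟨Finset.mem_univ x, SimpleGraph.Reachable.refl x⟩⟩,
    ⟨y, by simp [hxy]⟩, ?_⟩
  rintro e ⟨a, b, hab, ha, hb, rfl⟩
  simp only [Finset.mem_filter, Finset.mem_univ, true_and] at ha hb
  by_contra hnot
  exact hb (ha.trans (SimpleGraph.Adj.reachable (SimpleGraph.deleteEdges_adj.2 ⟨hab, hnot⟩)))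

lemma cutEdges_singleton (v : V) : cutEdges G {v} = G.incidenceSet v := by
  ext e
  induction e using Sym2.ind with
  | _ a b =>
    constructor
    · rintro ⟨x, y, hxy, hx, hy, heq⟩
      rw [heq]
      simp only [Finset.mem_singleton] at hx
      subst hx
      exact ⟨hxy, Sym2.mem_mk_left x y⟩
    · rintro ⟨he, hv⟩
      rcases Sym2.mem_iff.1 hv with rfl | rfl
      · exact ⟨v, b, he, Finset.mem_singleton_self v,
          by simp only [Finset.mem_singleton]; exact fun hb => G.irrefl (hb ▸ he), rfl⟩
      · exact ⟨v, a, he.symm, Finset.mem_singleton_self v,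
          by simp only [Finset.mem_singleton]; exact fun hb => G.irrefl (hb ▸ he.symm), Sym2.eq_swap⟩

lemma dd_compl (S : Finset V) : dd G Sᶜ = dd G S := by
  rw [← cutEdges_ncard, ← cutEdges_ncard, cutEdges_compl]

lemma dd_submod (S T : Finset V) :
    dd G (S ∩ T) + dd G (S ∪ T) ≤ dd G S + dd G T := by
  unfold dd
  rw [← Finset.sum_add_distrib, ← Finset.sum_add_distrib]
  apply Finset.sum_le_sum
  intro a _
  rw [← Finset.sum_add_distrib, ← Finset.sum_add_distrib]
  apply Finset.sum_le_sum
  intro b _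
  by_cases hab : G.Adj a b <;>
    by_cases h1 : a ∈ S <;> by_cases h2 : a ∈ T <;>
    by_cases h3 : b ∈ S <;> by_cases h4 : b ∈ T <;>
    simp [hab, h1, h2, h3, h4, Finset.mem_inter, Finset.mem_union]

lemma dd_submod' (S T : Finset V) :
    dd G (S \ T) + dd G (T \ S) ≤ dd G S + dd G T := by
  have h := dd_submod (G := G) S Tᶜ
  rw [dd_compl] at h
  have h2 : dd G (S ∪ Tᶜ) = dd G (T \ S) := by
    rw [← dd_compl (S ∪ Tᶜ), compl_union, compl_compl]
    congr 1
    ext x; simp [Finset.mem_sdiff, and_comm]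
  have h3 : S ∩ Tᶜ = S \ T := by ext x; simp [Finset.mem_sdiff]
  rw [h2, h3] at h
  exact h

lemma mem_image_iso (φ : G ≃g G) (S : Finset V) (a : V) :
    φ a ∈ S.image φ ↔ a ∈ S := by
  constructor
  · intro h
    obtain ⟨c, hc, hca⟩ := Finset.mem_image.1 h
    rwa [← φ.toEquiv.injective hca]
  · exact fun h => Finset.mem_image_of_mem _ h

lemma dd_image (φ : G ≃g G) (S : Finset V) : dd G (S.image φ) = dd G S := by
  unfold dd
  rw [← Equiv.sum_comp φ.toEquiv (fun a => ∑ b, if G.Adj a b ∧ a ∈ S.image φ ∧ b ∉ S.image φ then 1 else 0)]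
  apply Finset.sum_congr rfl
  intro a _
  rw [← Equiv.sum_comp φ.toEquiv]
  apply Finset.sum_congr rfl
  intro b _
  refine if_congr ?_ rfl rfl
  constructor
  · rintro ⟨h1, h2, h3⟩
    exact ⟨φ.map_adj_iff.1 h1, (mem_image_iso φ S a).1 h2,
      fun hb => h3 ((mem_image_iso φ S b).2 hb)⟩
  · rintro ⟨h1, h2, h3⟩
    exact ⟨φ.map_adj_iff.2 h1, (mem_image_iso φ S a).2 h2,
      fun hb => h3 ((mem_image_iso φ S b).1 hb)⟩

lemma dd_eq_sum_out (S : Finset V) :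
    dd G S = ∑ a ∈ S, ((G.neighborFinset a) \ S).card := by
  unfold dd
  rw [← Finset.sum_subset (Finset.subset_univ S)]
  · apply Finset.sum_congr rfl
    intro a ha
    rw [← Finset.card_filter]
    congr 1
    ext b
    simp [SimpleGraph.mem_neighborFinset, Finset.mem_sdiff, ha]
  · intro a _ ha
    apply Finset.sum_eq_zero
    intro b _
    simp [ha]

lemma deg_eq {k : ℕ} (hreg : ∀ v : V, (G.neighborSet v).ncard = k) (v : V) :
    (G.neighborFinset v).card = k := by
  have h := hreg v
  rwa [Set.ncard_eq_toFinset_card'] at h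

lemma out_lower {k : ℕ} (hreg : ∀ v : V, (G.neighborSet v).ncard = k)
    {S : Finset V} {x : V} (hx : x ∈ S) :
    k + 1 ≤ ((G.neighborFinset x) \ S).card + S.card := by
  have h1 : (G.neighborFinset x ∩ S).card + (G.neighborFinset x \ S).card = k := by
    rw [Finset.card_inter_add_card_sdiff, deg_eq hreg]
  have h2 : G.neighborFinset x ∩ S ⊆ S.erase x := by
    intro b hb
    simp only [Finset.mem_inter, SimpleGraph.mem_neighborFinset] at hb
    exact Finset.mem_erase.2 ⟨hb.1.ne', hb.2⟩
  have h3 := Finset.card_le_card h2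
  have h4 := Finset.card_erase_add_one hx
  omega

lemma dd_singleton {k : ℕ} (hreg : ∀ v : V, (G.neighborSet v).ncard = k) (v : V) :
    dd G {v} = k := by
  rw [dd_eq_sum_out, Finset.sum_singleton, ← deg_eq hreg v]
  congr 1
  ext b
  simp only [Finset.mem_sdiff, SimpleGraph.mem_neighborFinset, Finset.mem_singleton]
  exact ⟨fun h => h.1, fun h => ⟨h, fun hb => G.irrefl (hb ▸ h)⟩⟩

lemma out_image_stable (φ : G ≃g G) {S : Finset V} (hst : S.image φ = S) (x : V) :
    ((G.neighborFinset (φ x)) \ S).card = ((G.neighborFinset x) \ S).card := by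
  apply Finset.card_bij (fun b _ => φ.symm b)
  · intro b hb
    simp only [Finset.mem_sdiff, SimpleGraph.mem_neighborFinset] at hb ⊢
    constructor
    · have := φ.symm.map_adj_iff.2 hb.1
      simpa using this
    · intro hmem
      exact hb.2 (by rw [← hst]; exact (by simpa using Finset.mem_image_of_mem φ hmem))
  · intro b₁ h₁ b₂ h₂ h
    exact φ.symm.toEquiv.injective h
  · intro b hb
    refine ⟨φ b, ?_, by simp⟩
    simp only [Finset.mem_sdiff, SimpleGraph.mem_neighborFinset] at hb ⊢
    refine ⟨φ.map_adj_iff.2 hb.1, fun hmem => hb.2 ?_⟩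
    rw [← hst] at hmem
    obtain ⟨c, hc, hcb⟩ := Finset.mem_image.1 hmem
    rwa [← φ.toEquiv.injective hcb]

end Aux

section Main

variable {V : Type*} [Fintype V] [DecidableEq V] {G : SimpleGraph V} [DecidableRel G.Adj]

/-- key lemma: two distinct minimal nontrivial fragments are disjoint -/
lemma key_disjoint {k lam m : ℕ}
    (hreg : ∀ v : V, (G.neighborSet v).ncard = k) (hk : 4 ≤ k)
    (hlam : ∀ S : Finset V, S.Nonempty → Sᶜ.Nonempty → lam ≤ dd G S)
    (hlamk : lam ≤ k)
    (hmin : ∀ S : Finset V, 2 ≤ S.card → 2 ≤ Sᶜ.card → dd G S = lam → m ≤ S.card)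
    (hm2 : 2 ≤ m)
    {A B : Finset V} (hA : dd G A = lam) (hAm : A.card = m) (hAc : 2 ≤ Aᶜ.card)
    (hB : dd G B = lam) (hBm : B.card = m) (hBc : 2 ≤ Bᶜ.card)
    (hne : A ≠ B) : Disjoint A B := by
  by_contra hdisj
  rw [Finset.not_disjoint_iff] at hdisj
  obtain ⟨x, hxA, hxB⟩ := hdisj
  have hABne : (A ∩ B).Nonempty := ⟨x, Finset.mem_inter.2 ⟨hxA, hxB⟩⟩
  have hABpos : 0 < (A ∩ B).card := Finset.card_pos.2 hABne
  have hssub : A ∩ B ⊂ A := by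
    refine Finset.ssubset_iff_subset_ne.2 ⟨Finset.inter_subset_left, ?_⟩
    intro h
    have hsub : A ⊆ B := by rw [← h]; exact Finset.inter_subset_right
    exact hne (Finset.eq_of_subset_of_card_le hsub (by omega))
  have hABlt : (A ∩ B).card < m := hAm ▸ Finset.card_lt_card hssub
  have hsum := Finset.card_inter_add_card_sdiff A B
  have hAdiffne : (A \ B).Nonempty := by
    rw [Finset.sdiff_nonempty]
    intro hsub
    exact hne (Finset.eq_of_subset_of_card_le hsub (by omega))
  by_cases hU : A ∪ B = Finset.univ
  · have hABc : A \ B = Bᶜ := by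
      ext z
      simp only [Finset.mem_sdiff, Finset.mem_compl]
      constructor
      · rintro ⟨_, h⟩; exact h
      · intro h
        refine ⟨?_, h⟩
        have hz : z ∈ A ∪ B := hU ▸ Finset.mem_univ z
        rcases Finset.mem_union.1 hz with h' | h'
        exacts [h', absurd h' h]
    have hd : dd G (A \ B) = lam := by rw [hABc, dd_compl, hB]
    have hcard2 : 2 ≤ (A \ B).card := by rw [hABc]; exact hBc
    have hcomp : 2 ≤ (A \ B)ᶜ.card := by rw [hABc, compl_compl]; omega
    have := hmin _ hcard2 hcomp hd
    omega
  · obtain ⟨z, hz⟩ : ∃ z, z ∉ A ∪ B := by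
      by_contra h
      push_neg at h
      exact hU (Finset.eq_univ_of_forall h)
    have h1 : lam ≤ dd G (A ∩ B) :=
      hlam _ hABne ⟨z, Finset.mem_compl.2
        (fun h => hz (Finset.mem_union_left _ (Finset.mem_inter.1 h).1))⟩
    have h2 : lam ≤ dd G (A ∪ B) :=
      hlam _ ⟨x, Finset.mem_union_left _ hxA⟩ ⟨z, Finset.mem_compl.2 hz⟩
    have hsub1 := dd_submod (G := G) A B
    rw [hA, hB] at hsub1
    have hddAB : dd G (A ∩ B) = lam := by omega
    by_cases hc2 : 2 ≤ (A ∩ B).card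
    · have hcomp : 2 ≤ (A ∩ B)ᶜ.card :=
        le_trans hAc (Finset.card_le_card (Finset.compl_subset_compl.2 Finset.inter_subset_left))
      have := hmin _ hc2 hcomp hddAB
      omega
    · have hc1 : (A ∩ B).card = 1 := by omega
      obtain ⟨w, hw⟩ := Finset.card_eq_one.1 hc1
      have hlamk' : lam = k := by
        rw [hw, dd_singleton hreg w] at hddAB
        omega
      have hBdiffne : (B \ A).Nonempty := by
        rw [Finset.sdiff_nonempty]
        intro hsub
        exact hne ((Finset.eq_of_subset_of_card_le hsub (by omega)).symm)
      have h3 : lam ≤ dd G (A \ B) :=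
        hlam _ hAdiffne ⟨x, Finset.mem_compl.2 (fun h => (Finset.mem_sdiff.1 h).2 hxB)⟩
      have h4 : lam ≤ dd G (B \ A) :=
        hlam _ hBdiffne ⟨x, Finset.mem_compl.2 (fun h => (Finset.mem_sdiff.1 h).2 hxA)⟩
      have hsub2 := dd_submod' (G := G) A B
      rw [hA, hB] at hsub2
      have hdAB : dd G (A \ B) = lam := by omega
      by_cases hd2 : 2 ≤ (A \ B).card
      · have hcomp : 2 ≤ (A \ B)ᶜ.card := by
          have hsubB : B ⊆ (A \ B)ᶜ :=
            fun b hb => Finset.mem_compl.2 (fun h => (Finset.mem_sdiff.1 h).2 hb)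
          exact le_trans (by omega) (Finset.card_le_card hsubB)
        have := hmin _ hd2 hcomp hdAB
        omega
      · have hm : m = 2 := by
          have := Finset.card_pos.2 hAdiffne
          omega
        have hout : ∀ y ∈ A, k - 1 ≤ ((G.neighborFinset y) \ A).card := by
          intro y hy
          have := out_lower hreg hy
          omega
        have hbig : 2 * (k - 1) ≤ dd G A := by
          rw [dd_eq_sum_out]
          calc 2 * (k - 1) = ∑ _ ∈ A, (k - 1) := by
                rw [Finset.sum_const, hAm, hm, smul_eq_mul]
            _ ≤ _ := Finset.sum_le_sum hout
        omega

end Main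

/-- A connected vertex-transitive odd graph with even degree `k ≥ 4` is super edge-connected:
every minimum edge-cut is the set of edges incident with a single vertex. -/
theorem super_edge_connected {V : Type*} [Fintype V] (G : SimpleGraph V) (k : ℕ)
    (hconn : G.Connected)
    (hvt : ∀ x y : V, ∃ φ : G ≃g G, φ x = y)
    (hodd : Odd (Fintype.card V))
    (hreg : ∀ v : V, (G.neighborSet v).ncard = k)
    (hk : 4 ≤ k)
    (hkeven : Even k) :
    ∀ F : Set (Sym2 V), IsEdgeCut G F →
      (∀ F' : Set (Sym2 V), IsEdgeCut G F' → F.ncard ≤ F'.ncard) →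
      ∃ v : V, F = G.incidenceSet v := by
  classical
  intro F hF hmin
  set lam := F.ncard with hlamdef
  have hne : Nonempty V := hconn.nonempty
  obtain ⟨S₀, hS₀ne, hS₀c, hsub⟩ := exists_side hF.2 hne
  have hcut : IsEdgeCut G (cutEdges G S₀) := isEdgeCut_cutEdges hS₀ne hS₀c
  have hle : lam ≤ (cutEdges G S₀).ncard := hmin _ hcut
  have hFeq : cutEdges G S₀ = F := Set.eq_of_subset_of_ncard_le hsub hle (Set.toFinite F)
  have hlam0 : dd G S₀ = lam := by rw [← cutEdges_ncard, hFeq]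
  have hlamle : ∀ S : Finset V, S.Nonempty → Sᶜ.Nonempty → lam ≤ dd G S := by
    intro S hh1 hh2
    rw [← cutEdges_ncard]
    exact hmin _ (isEdgeCut_cutEdges hh1 hh2)
  obtain ⟨v0⟩ := hne
  have hdeg : (G.neighborFinset v0).card = k := deg_eq hreg v0
  obtain ⟨w0, hw0⟩ : (G.neighborFinset v0).Nonempty := Finset.card_pos.1 (by omega)
  have hadj0 : G.Adj v0 w0 := by rwa [SimpleGraph.mem_neighborFinset] at hw0
  have hw0ne : w0 ≠ v0 := hadj0.ne'
  have hlamk : lam ≤ k := by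
    have h := hlamle {v0} ⟨v0, Finset.mem_singleton_self v0⟩
      ⟨w0, Finset.mem_compl.2 (by simp [hw0ne])⟩
    rwa [dd_singleton hreg] at h
  have hlam1 : 1 ≤ lam := by
    by_contra h
    push_neg at h
    have h0 : F.ncard = 0 := by omega
    have hF0 : F = ∅ := (Set.ncard_eq_zero (Set.toFinite F)).1 h0
    exact hF.2 (by rw [hF0, SimpleGraph.deleteEdges_empty]; exact hconn)
  rcases Nat.lt_or_ge S₀.card 2 with hc1 | hc1
  · have h1 : S₀.card = 1 := by have := Finset.card_pos.2 hS₀ne; omega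
    obtain ⟨v, rfl⟩ := Finset.card_eq_one.1 h1
    exact ⟨v, by rw [← hFeq, cutEdges_singleton]⟩
  rcases Nat.lt_or_ge S₀ᶜ.card 2 with hc2 | hc2
  · have h1 : S₀ᶜ.card = 1 := by have := Finset.card_pos.2 hS₀c; omega
    obtain ⟨v, hv⟩ := Finset.card_eq_one.1 h1
    refine ⟨v, ?_⟩
    rw [← hFeq, ← cutEdges_compl, hv, cutEdges_singleton]
  exfalso
  have hex : ∃ n, ∃ S : Finset V, (2 ≤ S.card ∧ 2 ≤ Sᶜ.card ∧ dd G S = lam) ∧ S.card = n :=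
    ⟨S₀.card, S₀, ⟨hc1, hc2, hlam0⟩, rfl⟩
  set m := Nat.find hex with hmdef
  obtain ⟨A, ⟨hA2, hAc2, hAlam⟩, hAm⟩ := Nat.find_spec hex
  have hminm : ∀ S : Finset V, 2 ≤ S.card → 2 ≤ Sᶜ.card → dd G S = lam → m ≤ S.card := by
    intro S a b c
    by_contra hlt
    push_neg at hlt
    exact Nat.find_min hex hlt ⟨S, ⟨a, b, c⟩, rfl⟩
  have hm2 : 2 ≤ m := by omega
  obtain ⟨a₀, ha₀⟩ : A.Nonempty := Finset.card_pos.1 (by omega)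
  -- blocks
  have himgfacts : ∀ ψ : G ≃g G, dd G (A.image ψ) = lam ∧ (A.image ψ).card = m ∧
      2 ≤ (A.image ψ)ᶜ.card := by
    intro ψ
    have hci : (A.image ψ).card = A.card := Finset.card_image_of_injective A ψ.injective
    refine ⟨by rw [dd_image ψ A]; exact hAlam, by rw [hci]; exact hAm, ?_⟩
    rw [Finset.card_compl, hci]
    rw [Finset.card_compl] at hAc2
    omega
  have hdich : ∀ ψ χ : G ≃g G, A.image ψ = A.image χ ∨ Disjoint (A.image ψ) (A.image χ) := by
    intro ψ χ
    by_cases heq : A.image ψ = A.image χ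
    · exact Or.inl heq
    · obtain ⟨d1, d2, d3⟩ := himgfacts ψ
      obtain ⟨e1, e2, e3⟩ := himgfacts χ
      exact Or.inr (key_disjoint hreg hk hlamle hlamk hminm hm2 d1 d2 d3 e1 e2 e3 heq)
  -- stabilizer transitivity: all out-degrees in A are equal
  have hdichA : ∀ ψ : G ≃g G, A.image ψ = A ∨ Disjoint (A.image ψ) A := by
    intro ψ
    by_cases heq : A.image ψ = A
    · exact Or.inl heq
    · obtain ⟨d1, d2, d3⟩ := himgfacts ψ
      exact Or.inr (key_disjoint hreg hk hlamle hlamk hminm hm2 d1 d2 d3 hAlam hAm hAc2 heq)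
  have hstab : ∀ ψ : G ≃g G, ψ a₀ ∈ A → A.image ψ = A := by
    intro ψ hψ
    rcases hdichA ψ with h | h
    · exact h
    · exact absurd hψ (Finset.disjoint_left.1 h (Finset.mem_image_of_mem ψ ha₀))
  set t := ((G.neighborFinset a₀) \ A).card with htdef
  have hsame : ∀ y ∈ A, ((G.neighborFinset y) \ A).card = t := by
    intro y hy
    obtain ⟨ψ, hψ⟩ := hvt a₀ y
    have hst : A.image ψ = A := hstab ψ (by rw [hψ]; exact hy)
    have h := out_image_stable ψ hst a₀
    rw [hψ] at h
    exact h
  have hddA : dd G A = m * t := by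
    rw [dd_eq_sum_out, Finset.sum_congr rfl hsame, Finset.sum_const, hAm, smul_eq_mul]
  have hlameq : lam = m * t := by rw [← hAlam, hddA]
  have hkle : k + 1 ≤ t + m := by
    have := out_lower hreg ha₀
    omega
  have ht1 : 1 ≤ t := by
    by_contra h
    push_neg at h
    have ht0 : t = 0 := by omega
    rw [ht0, Nat.mul_zero] at hlameq
    omega
  -- partition of V into blocks of size m
  have hmem : ∀ v : V, v ∈ A.image ⇑((hvt a₀ v).choose) := by
    intro v
    exact Finset.mem_image.2 ⟨a₀, ha₀, (hvt a₀ v).choose_spec⟩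
  set P : Finset (Finset V) :=
    Finset.univ.image (fun v => A.image ⇑((hvt a₀ v).choose)) with hPdef
  have hcover : P.biUnion id = Finset.univ := by
    apply Finset.eq_univ_of_forall
    intro v
    exact Finset.mem_biUnion.2 ⟨_, Finset.mem_image_of_mem _ (Finset.mem_univ v), hmem v⟩
  have hdisjP : ∀ p ∈ P, ∀ q ∈ P, p ≠ q → Disjoint p q := by
    intro p hp q hq hpq
    obtain ⟨u, _, rfl⟩ := Finset.mem_image.1 hp
    obtain ⟨v, _, rfl⟩ := Finset.mem_image.1 hq
    rcases hdich _ _ with h | h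
    · exact absurd h hpq
    · exact h
  have hcardV : Fintype.card V = P.card * m := by
    calc Fintype.card V = (P.biUnion id).card := by rw [hcover, Finset.card_univ]
      _ = ∑ p ∈ P, (id p).card := Finset.card_biUnion hdisjP
      _ = ∑ _p ∈ P, m := Finset.sum_congr rfl (fun p hp => by
            obtain ⟨u, _, rfl⟩ := Finset.mem_image.1 hp
            exact (himgfacts _).2.1)
      _ = P.card * m := by rw [Finset.sum_const, smul_eq_mul]
  have hmodd : Odd m := by
    rcases Nat.even_or_odd m with he | ho
    · exfalso
      have heV : Even (Fintype.card V) := by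
        rw [hcardV]
        exact he.mul_left P.card
      exact (Nat.not_odd_iff_even.2 heV) hodd
    · exact ho
  -- endgame arithmetic
  have ht : t = 1 := by
    by_contra h
    have ht2 : 2 ≤ t := by omega
    have hA1 : m * 2 ≤ m * t := Nat.mul_le_mul (le_refl m) ht2
    have hA2 : 2 * t ≤ m * t := Nat.mul_le_mul hm2 (le_refl t)
    have h3 : m * t ≤ k := hlameq ▸ hlamk
    linarith
  rw [ht, Nat.mul_one] at hlameq
  have hkm : k = m := by omega
  have h1 := Nat.even_iff.1 hkeven
  have h2 := Nat.odd_iff.1 hmodd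
  omega
end

section
/- Let G be a k-regular simple graph and let X be a subset of the vertex set of G with |X| ≥ 3 such that the number of edges with exactly one end in X equals 2k − 2. Then |X| ≥ k − 1. -/
open SimpleGraph

/-- The set of edges of `G` with exactly one end in `S`. -/
def edgeBoundary {V : Type*} (G : SimpleGraph V) (S : Set V) : Set (Sym2 V) :=
  {e | e ∈ G.edgeSet ∧ ∃ x ∈ S, ∃ y ∉ S, e = s(x, y)}

/-- In a `k`-regular graph, a vertex subset `X` with `|X| ≥ 3` and `d(X) = 2k - 2`
satisfies `|X| ≥ k - 1`. -/
theorem superatom_size_lower_bound {V : Type*} [Fintype V] (G : SimpleGraph V) (k : ℕ)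
    (hreg : ∀ v : V, (G.neighborSet v).ncard = k)
    (X : Set V)
    (hX : 3 ≤ X.ncard)
    (hd : (edgeBoundary G X).ncard = 2 * k - 2) :
    k - 1 ≤ X.ncard := by
  classical
  by_contra hcon
  push_neg at hcon
  set n := X.ncard with hn
  have hkn : n + 2 ≤ k := by omega
  -- the set of ordered boundary pairs
  set P : Set (V × V) := {p | p.1 ∈ X ∧ p.2 ∉ X ∧ G.Adj p.1 p.2} with hP
  -- edgeBoundary is the image of P under Sym2.mk
  have himg : edgeBoundary G X = Sym2.mk.uncurry '' P := by
    ext e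
    constructor
    · rintro ⟨he, x, hx, y, hy, rfl⟩
      exact ⟨(x, y), ⟨hx, hy, he⟩, rfl⟩
    · rintro ⟨⟨x, y⟩, ⟨hx, hy, hadj⟩, rfl⟩
      exact ⟨hadj, x, hx, y, hy, rfl⟩
  have hinj : Set.InjOn Sym2.mk.uncurry P := by
    rintro ⟨a, b⟩ ⟨ha, hb, -⟩ ⟨c, d⟩ ⟨hc, hd', -⟩ heq
    replace heq := (Sym2.mk_eq_mk_iff (p := (a, b)) (q := (c, d))).mp heq
    rcases heq with h | h
    · exact h
    · simp only [Prod.swap_prod_mk, Prod.mk.injEq] at h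
      exact absurd (h.1 ▸ ha) hd'
  have hPcard : P.ncard = 2 * k - 2 := by
    rw [← hd, himg, Set.ncard_image_of_injOn hinj]
  -- finite sets
  have hXfin : X.Finite := Set.toFinite X
  have hPfin : P.Finite := Set.toFinite P
  set Xf := hXfin.toFinset with hXf
  set Pf := hPfin.toFinset with hPf
  have hPcard' : Pf.card = 2 * k - 2 := by
    rw [← hPcard, Set.ncard_eq_toFinset_card P hPfin]
  -- fiberwise count over first coordinates
  have hfib : Pf.card = ∑ x ∈ Xf, (Pf.filter (fun p => p.1 = x)).card := by
    apply Finset.card_eq_sum_card_fiberwise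
    intro p hp
    simp only [Finset.mem_coe, hPf, hXf, Set.Finite.mem_toFinset, hP, Set.mem_setOf_eq] at hp ⊢
    exact hp.1
  -- each fiber has at least k - (n - 1) elements
  have hbound : ∀ x ∈ Xf, k - (n - 1) ≤ (Pf.filter (fun p => p.1 = x)).card := by
    intro x hx
    rw [hXf, Set.Finite.mem_toFinset] at hx
    set B : Set V := G.neighborSet x \ X with hB
    have hBfin : B.Finite := Set.toFinite B
    have h1 : (G.neighborSet x ∩ X).ncard + B.ncard = k := by
      rw [hB, Set.ncard_inter_add_ncard_diff_eq_ncard _ _ (Set.toFinite _), hreg]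
    have h2 : (G.neighborSet x ∩ X).ncard ≤ n - 1 := by
      have hsub : G.neighborSet x ∩ X ⊆ X \ {x} := by
        rintro y ⟨hy1, hy2⟩
        refine ⟨hy2, ?_⟩
        simp only [Set.mem_singleton_iff]
        rintro rfl
        exact G.irrefl hy1
      calc (G.neighborSet x ∩ X).ncard ≤ (X \ {x}).ncard :=
            Set.ncard_le_ncard hsub (Set.toFinite _)
        _ = n - 1 := by rw [Set.ncard_diff_singleton_of_mem hx]
    have h3 : k - (n - 1) ≤ B.ncard := by omega
    refine le_trans h3 ?_
    rw [Set.ncard_eq_toFinset_card B hBfin]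
    apply Finset.card_le_card_of_injOn (fun y => (x, y))
    · intro y hy
      rw [Finset.mem_coe, Set.Finite.mem_toFinset] at hy
      refine Finset.mem_filter.mpr ⟨?_, rfl⟩
      rw [hPf, Set.Finite.mem_toFinset]
      exact ⟨hx, hy.2, hy.1⟩
    · intro a _ b _ hab
      exact (Prod.mk.injEq x a x b).mp hab |>.2
  -- put it together
  have hXfcard : Xf.card = n := by
    rw [hXf, hn, Set.ncard_eq_toFinset_card X hXfin]
  have htotal : n * (k - (n - 1)) ≤ 2 * k - 2 := by
    calc n * (k - (n - 1)) = ∑ _x ∈ Xf, (k - (n - 1)) := by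
          rw [Finset.sum_const, hXfcard, smul_eq_mul]
      _ ≤ ∑ x ∈ Xf, (Pf.filter (fun p => p.1 = x)).card := Finset.sum_le_sum hbound
      _ = Pf.card := hfib.symm
      _ = 2 * k - 2 := hPcard'
  -- arithmetic contradiction
  have hm : k - (n - 1) = k + 1 - n := by omega
  rw [hm] at htotal
  set m := k + 1 - n with hmdef
  have hm3 : 3 ≤ m := by omega
  have e : 2 * k - 2 = 2 * m + 2 * n - 4 := by omega
  rw [e] at htotal
  obtain ⟨a, ha⟩ : ∃ a, n = a + 3 := ⟨n - 3, by omega⟩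
  obtain ⟨b, hb⟩ : ∃ b, m = b + 3 := ⟨m - 3, by omega⟩
  rw [ha, hb] at htotal
  have e2 : 2 * (b + 3) + 2 * (a + 3) - 4 = 2 * b + 2 * a + 8 := by omega
  rw [e2] at htotal
  nlinarith [htotal]
end

section
/- Let G be a simple connected vertex-transitive graph of odd order with vertex degree k ≥ 4 and girth greater than 3, and suppose G is not super restricted edge-connected. Then G has two distinct λ₂-superatoms X and Y with X ∩ Y nonempty. -/
open SimpleGraph

/-- A restricted edge-cut: an edge-cut such that every component of `G - F` has at least
2 vertices. -/
def IsRestrictedEdgeCut {V : Type*} (G : SimpleGraph V) (F : Set (Sym2 V)) : Prop :=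
  IsEdgeCut G F ∧ ∀ c : (G.deleteEdges F).ConnectedComponent, 2 ≤ c.supp.ncard

/-- The restricted edge-connectivity `λ₂(G)`. -/
noncomputable def lambda2 {V : Type*} (G : SimpleGraph V) : ℕ :=
  sInf {n | ∃ F : Set (Sym2 V), IsRestrictedEdgeCut G F ∧ F.ncard = n}

/-- The minimum edge-degree `ξ(G)`: the minimum over all edges `uv` of `d(u) + d(v) - 2`. -/
noncomputable def xi {V : Type*} (G : SimpleGraph V) : ℕ :=
  sInf {n | ∃ u v : V, G.Adj u v ∧
    n = (G.neighborSet u).ncard + (G.neighborSet v).ncard - 2}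

/-- The set of edges of `G` adjacent to the edge `e`. -/
def adjEdges {V : Type*} (G : SimpleGraph V) (e : Sym2 V) : Set (Sym2 V) :=
  {f | f ∈ G.edgeSet ∧ f ≠ e ∧ ∃ x : V, x ∈ f ∧ x ∈ e}

/-- `G` is super restricted edge-connected. -/
def SuperLambda2 {V : Type*} (G : SimpleGraph V) : Prop :=
  lambda2 G = xi G ∧
    ∀ F : Set (Sym2 V), IsRestrictedEdgeCut G F → F.ncard = lambda2 G →
      ∃ e ∈ G.edgeSet, F = adjEdges G e

/-- `X` is a `λ₂`-fragment: a proper vertex subset such that `∇(X)` is a minimum restricted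
edge-cut. -/
def IsLambda2Fragment {V : Type*} (G : SimpleGraph V) (X : Set V) : Prop :=
  X ≠ Set.univ ∧ IsRestrictedEdgeCut G (edgeBoundary G X) ∧
    (edgeBoundary G X).ncard = lambda2 G

/-- `X` is a `λ₂`-superatom: a nontrivial `λ₂`-fragment of minimum cardinality. -/
def IsLambda2Superatom {V : Type*} (G : SimpleGraph V) (X : Set V) : Prop :=
  IsLambda2Fragment G X ∧ X.ncard ≠ 2 ∧
    ∀ Y : Set V, IsLambda2Fragment G Y → Y.ncard ≠ 2 → X.ncard ≤ Y.ncard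

set_option linter.unusedSectionVars false
set_option linter.unusedVariables false

section Aux
variable {V : Type*} [Fintype V] {G : SimpleGraph V} {X : Set V}

lemma mem_boundary_of {x y : V} (hadj : G.Adj x y) (hx : x ∈ X) (hy : y ∉ X) :
    s(x, y) ∈ edgeBoundary G X :=
  ⟨hadj, x, hx, y, hy, rfl⟩

lemma not_mem_boundary_of {x y : V} (hx : x ∉ X) (hy : y ∉ X) :
    s(x, y) ∉ edgeBoundary G X := by
  rintro ⟨-, a, ha, b, hb, hab⟩
  rw [Sym2.eq_iff] at hab
  rcases hab with ⟨rfl, rfl⟩ | ⟨rfl, rfl⟩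
  · exact hx ha
  · exact hy ha

lemma not_mem_boundary_of_mem {x y : V} (hx : x ∈ X) (hy : y ∈ X) :
    s(x, y) ∉ edgeBoundary G X := by
  rintro ⟨-, a, ha, b, hb, hab⟩
  rw [Sym2.eq_iff] at hab
  rcases hab with ⟨rfl, rfl⟩ | ⟨rfl, rfl⟩
  · exact hb hy
  · exact hb hx

lemma delete_boundary_adj {a b : V} (h : (G.deleteEdges (edgeBoundary G X)).Adj a b) :
    a ∈ X ↔ b ∈ X := by
  rw [deleteEdges_adj] at h
  obtain ⟨hadj, hmem⟩ := h
  constructor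
  · intro ha; by_contra hb; exact hmem (mem_boundary_of hadj ha hb)
  · intro hb; by_contra ha
    exact hmem ⟨G.mem_edgeSet.mpr hadj, b, hb, a, ha, Sym2.eq_swap.symm⟩

lemma walk_mem_iff {H : SimpleGraph V} (hH : ∀ a b : V, H.Adj a b → (a ∈ X ↔ b ∈ X))
    {a b : V} (w : H.Walk a b) : a ∈ X ↔ b ∈ X := by
  induction w with
  | nil => exact Iff.rfl
  | cons h p ih => exact (hH _ _ h).trans ih

lemma reach_boundary_mem_iff {a b : V}
    (h : (G.deleteEdges (edgeBoundary G X)).Reachable a b) : a ∈ X ↔ b ∈ X := by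
  obtain ⟨w⟩ := h
  exact walk_mem_iff (fun _ _ h' => delete_boundary_adj h') w

lemma two_le_supp_iff (H : SimpleGraph V) :
    (∀ c : H.ConnectedComponent, 2 ≤ c.supp.ncard) ↔
      ∀ v : V, ∃ w, w ≠ v ∧ H.Reachable w v := by
  constructor
  · intro h v
    by_contra hc
    push_neg at hc
    have hsub : (H.connectedComponentMk v).supp ⊆ {v} := by
      intro w hw
      rw [ConnectedComponent.mem_supp_iff] at hw
      have hr : H.Reachable w v := ConnectedComponent.exact hw
      by_contra hne
      exact hc w (by simpa using hne) hr
    have := (h (H.connectedComponentMk v)).trans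
      (Set.ncard_le_ncard hsub (Set.finite_singleton v))
    simp at this
  · intro h c
    obtain ⟨v, rfl⟩ := c.exists_rep
    obtain ⟨w, hw, hr⟩ := h v
    have hsub : ({w, v} : Set V) ⊆ (H.connectedComponentMk v).supp := by
      intro z hz
      rcases hz with rfl | rfl
      · exact (ConnectedComponent.mem_supp_iff _ _).mpr (ConnectedComponent.sound hr)
      · exact (ConnectedComponent.mem_supp_iff _ _).mpr rfl
    calc (2 : ℕ) = ({w, v} : Set V).ncard := (Set.ncard_pair hw).symm
      _ ≤ _ := Set.ncard_le_ncard hsub (Set.toFinite _)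

lemma eq_of_reachable_of_no_adj {H : SimpleGraph V} {x : V} (h : ∀ z, ¬ H.Adj x z) {y : V}
    (hr : H.Reachable x y) : y = x := by
  obtain ⟨w⟩ := hr
  cases w with
  | nil => rfl
  | cons h' _ => exact absurd h' (h _)

end Aux

section Aux2
variable {V : Type*} [Fintype V] {G : SimpleGraph V} {X : Set V}

lemma lambda2_le_of {F : Set (Sym2 V)} (h : IsRestrictedEdgeCut G F) :
    lambda2 G ≤ F.ncard :=
  Nat.sInf_le ⟨F, h, rfl⟩

lemma exists_min_cut (hne : ∃ F : Set (Sym2 V), IsRestrictedEdgeCut G F) :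
    ∃ F : Set (Sym2 V), IsRestrictedEdgeCut G F ∧ F.ncard = lambda2 G := by
  obtain ⟨F, hF⟩ := hne
  have : lambda2 G ∈ {n | ∃ F : Set (Sym2 V), IsRestrictedEdgeCut G F ∧ F.ncard = n} :=
    Nat.sInf_mem ⟨F.ncard, F, hF, rfl⟩
  exact this

lemma lambda2_pos (hconn : G.Connected)
    (hne : ∃ F : Set (Sym2 V), IsRestrictedEdgeCut G F) : 1 ≤ lambda2 G := by
  by_contra h
  push_neg at h
  interval_cases hl : lambda2 G
  obtain ⟨F, hF, hcard⟩ := exists_min_cut hne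
  rw [hl] at hcard
  rw [Set.ncard_eq_zero (Set.toFinite F)] at hcard
  subst hcard
  exact hF.1.2 (by rwa [deleteEdges_empty])

lemma pair_restricted {k : ℕ} (hreg : ∀ v : V, (G.neighborSet v).ncard = k) (hk : 3 ≤ k)
    {u v : V} (huv : G.Adj u v) : IsRestrictedEdgeCut G (edgeBoundary G {u, v}) := by
  have hout : ∀ p : V, ∃ q, G.Adj p q ∧ q ∉ ({u, v} : Set V) := by
    intro p
    by_contra hc
    push_neg at hc
    have hsub : G.neighborSet p ⊆ {u, v} := fun q hq => hc q hq
    have := Set.ncard_le_ncard hsub (Set.toFinite _)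
    rw [hreg] at this
    have h2 : ({u, v} : Set V).ncard ≤ 2 := by
      apply (Set.ncard_insert_le _ _).trans
      simp
    omega
  refine ⟨⟨fun e he => he.1, ?_⟩, ?_⟩
  · intro hcon
    obtain ⟨z, hz, hzm⟩ := hout u
    have hr := hcon.preconnected u z
    have hz2 : z ∈ ({u, v} : Set V) :=
      (reach_boundary_mem_iff (X := ({u, v} : Set V)) hr).mp (by simp)
    exact hzm hz2
  · rw [two_le_supp_iff]
    intro p
    by_cases hp : p ∈ ({u, v} : Set V)
    · rcases hp with rfl | rfl
      · refine ⟨v, huv.ne', Adj.reachable ?_⟩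
        rw [deleteEdges_adj]
        exact ⟨huv.symm, not_mem_boundary_of_mem (by simp) (by simp)⟩
      · refine ⟨u, huv.ne, Adj.reachable ?_⟩
        rw [deleteEdges_adj]
        exact ⟨huv, not_mem_boundary_of_mem (by simp) (by simp)⟩
    · obtain ⟨q, hq, hqm⟩ := hout p
      refine ⟨q, hq.ne', Adj.reachable ?_⟩
      rw [deleteEdges_adj]
      exact ⟨hq.symm, not_mem_boundary_of hqm hp⟩

lemma pair_boundary_card {k : ℕ} (hreg : ∀ v : V, (G.neighborSet v).ncard = k)
    {u v : V} (huv : G.Adj u v) :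
    (edgeBoundary G ({u, v} : Set V)).ncard ≤ 2 * k - 2 := by
  have hsub : edgeBoundary G ({u, v} : Set V) ⊆
      ((fun w => s(u, w)) '' (G.neighborSet u \ {v})) ∪
        ((fun w => s(v, w)) '' (G.neighborSet v \ {u})) := by
    rintro e ⟨he, x, hx, y, hy, rfl⟩
    simp only [Set.mem_insert_iff, Set.mem_singleton_iff] at hx hy
    push_neg at hy
    rw [G.mem_edgeSet] at he
    rcases hx with rfl | rfl
    · exact Or.inl ⟨y, ⟨he, hy.2⟩, rfl⟩
    · exact Or.inr ⟨y, ⟨he, hy.1⟩, rfl⟩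
  have h1 : ((fun w => s(u, w)) '' (G.neighborSet u \ {v})).ncard ≤ k - 1 := by
    apply (Set.ncard_image_le (Set.toFinite _)).trans
    have hv : v ∈ G.neighborSet u := huv
    rw [Set.ncard_diff_singleton_of_mem hv, hreg]
  have h2 : ((fun w => s(v, w)) '' (G.neighborSet v \ {u})).ncard ≤ k - 1 := by
    apply (Set.ncard_image_le (Set.toFinite _)).trans
    have hu : u ∈ G.neighborSet v := huv.symm
    rw [Set.ncard_diff_singleton_of_mem hu, hreg]
  have := (Set.ncard_le_ncard hsub (Set.toFinite _)).trans
    ((Set.ncard_union_le _ _).trans (add_le_add h1 h2))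
  omega

end Aux2

section Aux3
variable {V : Type*} [Fintype V] {G : SimpleGraph V} {X : Set V}

lemma supp_eq_filter (H : SimpleGraph V) (c : H.ConnectedComponent)
    [DecidablePred (fun v => H.connectedComponentMk v = c)] :
    c.supp.ncard = (Finset.univ.filter (fun v => H.connectedComponentMk v = c)).card := by
  rw [← Set.ncard_coe_finset]
  congr 1
  ext v
  simp [ConnectedComponent.mem_supp_iff]

lemma exists_big_component (H : SimpleGraph V) (hodd : Odd (Fintype.card V))
    (h2 : ∀ c : H.ConnectedComponent, 2 ≤ c.supp.ncard) :
    ∃ c : H.ConnectedComponent, 3 ≤ c.supp.ncard := by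
  classical
  by_contra h
  push_neg at h
  have hcc : ∀ c : H.ConnectedComponent, c.supp.ncard = 2 := fun c =>
    le_antisymm (by have := h c; omega) (h2 c)
  have : Fintype H.ConnectedComponent := Fintype.ofFinite _
  have hcard := Finset.card_eq_sum_card_fiberwise
    (f := H.connectedComponentMk) (s := Finset.univ) (t := Finset.univ)
    (fun x _ => Finset.mem_univ _)
  rw [Finset.card_univ] at hcard
  have heven : Fintype.card V = 2 * (Finset.univ : Finset H.ConnectedComponent).card := by
    rw [hcard]
    rw [Finset.sum_congr rfl (fun c _ => ((supp_eq_filter H c).symm.trans (hcc c)))]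
    rw [Finset.sum_const, smul_eq_mul, mul_comm]
  rw [heven, Nat.odd_iff] at hodd
  omega

lemma exists_nontrivial_fragment (hconn : G.Connected) (hodd : Odd (Fintype.card V))
    (hne : ∃ F : Set (Sym2 V), IsRestrictedEdgeCut G F) :
    ∃ X : Set V, IsLambda2Fragment G X ∧ 3 ≤ X.ncard := by
  obtain ⟨F, hF, hcard⟩ := exists_min_cut hne
  set H := G.deleteEdges F with hH
  obtain ⟨c, hc⟩ := exists_big_component H hodd hF.2
  -- the boundary of the component is contained in F
  have hsub : edgeBoundary G c.supp ⊆ F := by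
    rintro e ⟨he, x, hx, y, hy, rfl⟩
    by_contra hef
    have hadj : H.Adj x y := by
      rw [hH, deleteEdges_adj]
      exact ⟨G.mem_edgeSet.mp he, hef⟩
    rw [ConnectedComponent.mem_supp_iff] at hx hy
    exact hy ((ConnectedComponent.connectedComponentMk_eq_of_adj hadj.symm).trans hx)
  -- H has two non-reachable vertices
  have hNE : Nonempty V := Fintype.card_pos_iff.mp (by
    rcases hodd with ⟨t, ht⟩; omega)
  have hdiscon : ∃ a b : V, ¬ H.Reachable a b := by
    by_contra hcon
    push_neg at hcon
    exact hF.1.2 ((connected_iff _).mpr ⟨fun a b => hcon a b, hNE⟩)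
  obtain ⟨a, b, hab⟩ := hdiscon
  have hXuniv : c.supp ≠ Set.univ := by
    intro hu
    have ha : a ∈ c.supp := hu ▸ Set.mem_univ a
    have hb : b ∈ c.supp := hu ▸ Set.mem_univ b
    rw [ConnectedComponent.mem_supp_iff] at ha hb
    exact hab (ConnectedComponent.exact (ha.trans hb.symm))
  -- H ≤ deleteEdges (edgeBoundary c.supp)
  have hle : H ≤ G.deleteEdges (edgeBoundary G c.supp) := by
    intro x y hxy
    rw [hH, deleteEdges_adj] at hxy
    rw [deleteEdges_adj]
    exact ⟨hxy.1, fun hmem => hxy.2 (hsub hmem)⟩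
  have hrc : IsRestrictedEdgeCut G (edgeBoundary G c.supp) := by
    refine ⟨⟨fun e he => he.1, ?_⟩, ?_⟩
    · intro hcon
      obtain ⟨v, hv0⟩ := c.exists_rep
      have hv : H.connectedComponentMk v = c := hv0
      obtain ⟨w, hw⟩ : ∃ w : V, w ∉ c.supp := by
        by_contra hall
        push_neg at hall
        exact hXuniv (Set.eq_univ_of_forall hall)
      have hr := hcon.preconnected v w
      have := (reach_boundary_mem_iff hr).mp (by
        rw [ConnectedComponent.mem_supp_iff, hv])
      exact hw this
    · rw [two_le_supp_iff]
      intro p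
      obtain ⟨q, hq, hr⟩ := (two_le_supp_iff H).mp hF.2 p
      exact ⟨q, hq, hr.mono hle⟩
  have hbcard : (edgeBoundary G c.supp).ncard = lambda2 G :=
    le_antisymm (hcard ▸ Set.ncard_le_ncard hsub (Set.toFinite F)) (lambda2_le_of hrc)
  exact ⟨c.supp, ⟨hXuniv, hrc, hbcard⟩, hc⟩

lemma exists_superatom (h : ∃ X : Set V, IsLambda2Fragment G X ∧ X.ncard ≠ 2) :
    ∃ X : Set V, IsLambda2Superatom G X := by
  set S := {n | ∃ X : Set V, (IsLambda2Fragment G X ∧ X.ncard ≠ 2) ∧ X.ncard = n} with hS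
  obtain ⟨X0, h0⟩ := h
  have hSne : S.Nonempty := ⟨X0.ncard, X0, h0, rfl⟩
  obtain ⟨X, ⟨hf, h2⟩, hX⟩ := Nat.sInf_mem hSne
  exact ⟨X, hf, h2, fun Y hYf hY2 => hX ▸ Nat.sInf_le ⟨Y, ⟨hYf, hY2⟩, rfl⟩⟩

lemma no_isolated_in_fragment (hfrag : IsLambda2Fragment G X) {x : V} (hx : x ∈ X)
    (h0 : G.neighborSet x ∩ X = ∅) : False := by
  set H := G.deleteEdges (edgeBoundary G X) with hH
  have hnbr : ∀ z, ¬ H.Adj x z := by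
    intro z hz
    rw [hH, deleteEdges_adj] at hz
    obtain ⟨hadj, hmem⟩ := hz
    by_cases hzX : z ∈ X
    · exact absurd (Set.mem_inter ((G.mem_neighborSet x z).mpr hadj) hzX) (h0 ▸ Set.notMem_empty z)
    · exact hmem (mem_boundary_of hadj hx hzX)
  have hsupp : (H.connectedComponentMk x).supp ⊆ {x} := by
    intro y hy
    rw [ConnectedComponent.mem_supp_iff] at hy
    have hr : H.Reachable x y := (ConnectedComponent.exact hy).symm
    exact eq_of_reachable_of_no_adj hnbr hr
  have h2 := hfrag.2.1.2 (H.connectedComponentMk x)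
  have := (Set.ncard_le_ncard hsupp (Set.finite_singleton x))
  rw [Set.ncard_singleton] at this
  omega

end Aux3

section Aux4
variable {V : Type*} [Fintype V] {G : SimpleGraph V} {X : Set V}

lemma iso_boundary (φ : G ≃g G) (X : Set V) :
    edgeBoundary G (φ '' X) = Sym2.map φ '' edgeBoundary G X := by
  ext e
  constructor
  · rintro ⟨he, a, ⟨x, hx, rfl⟩, b, hb, rfl⟩
    have hb' : φ.symm b ∉ X := by
      intro h
      exact hb ⟨φ.symm b, h, φ.apply_symm_apply b⟩
    have hadj : G.Adj (φ x) b := G.mem_edgeSet.mp he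
    have hadj' : G.Adj x (φ.symm b) := by
      have := φ.symm.map_adj_iff.mpr hadj
      simpa using this
    refine ⟨s(x, φ.symm b), ⟨G.mem_edgeSet.mpr hadj', x, hx, φ.symm b, hb', rfl⟩, ?_⟩
    rw [Sym2.map_pair_eq, φ.apply_symm_apply]
  · rintro ⟨e', ⟨he', x, hx, y, hy, rfl⟩, rfl⟩
    rw [Sym2.map_pair_eq]
    refine ⟨G.mem_edgeSet.mpr (φ.map_adj_iff.mpr (G.mem_edgeSet.mp he')), φ x,
      ⟨x, hx, rfl⟩, φ y, ?_, rfl⟩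
    rintro ⟨z, hz, hzy⟩
    exact hy ((φ.injective hzy) ▸ hz)

/-- The isomorphism between deleted-edge graphs induced by an automorphism. -/
def deleteIso (φ : G ≃g G) (F : Set (Sym2 V)) :
    G.deleteEdges F ≃g G.deleteEdges (Sym2.map φ '' F) where
  toEquiv := φ.toEquiv
  map_rel_iff' := by
    intro a b
    simp only [Equiv.coe_fn_mk, deleteEdges_adj]
    constructor
    · rintro ⟨h1, h2⟩
      refine ⟨φ.map_adj_iff.mp h1, fun hmem => h2 ?_⟩
      have : s(φ.toEquiv a, φ.toEquiv b) = Sym2.map φ s(a, b) := by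
        rw [Sym2.map_pair_eq]; rfl
      rw [this]
      exact ⟨s(a, b), hmem, rfl⟩
    · rintro ⟨h1, h2⟩
      refine ⟨φ.map_adj_iff.mpr h1, fun hmem => ?_⟩
      have heq : s(φ.toEquiv a, φ.toEquiv b) = Sym2.map φ s(a, b) := by
        rw [Sym2.map_pair_eq]; rfl
      rw [heq] at hmem
      obtain ⟨e', he', hee⟩ := hmem
      have := Sym2.map.injective φ.injective hee
      exact h2 (this ▸ he')

lemma iso_restricted (φ : G ≃g G) {F : Set (Sym2 V)} (h : IsRestrictedEdgeCut G F) :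
    IsRestrictedEdgeCut G (Sym2.map φ '' F) := by
  obtain ⟨⟨hsub, hdis⟩, hcomp⟩ := h
  refine ⟨⟨?_, ?_⟩, ?_⟩
  · rintro e ⟨e', he', rfl⟩
    exact φ.map_mem_edgeSet_iff.mpr (hsub he')
  · intro hcon
    exact hdis ((deleteIso φ F).connected_iff.mpr hcon)
  · rw [two_le_supp_iff]
    rw [two_le_supp_iff] at hcomp
    intro v
    obtain ⟨w, hw, hr⟩ := hcomp (φ.symm v)
    refine ⟨φ w, ?_, ?_⟩
    · intro h
      apply hw
      have : w = φ.symm v := by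
        have := congrArg φ.symm h
        simpa using this
      exact this
    · have h2 := hr.map (deleteIso φ F).toHom
      have hv : (deleteIso φ F).toHom (φ.symm v) = v := by
        show φ (φ.symm v) = v
        simp
      have hw2 : (deleteIso φ F).toHom w = φ w := rfl
      rw [hv, hw2] at h2
      exact h2

lemma iso_fragment (φ : G ≃g G) (h : IsLambda2Fragment G X) :
    IsLambda2Fragment G (φ '' X) := by
  obtain ⟨hu, hrc, hcard⟩ := h
  refine ⟨?_, ?_, ?_⟩
  · intro heq
    apply hu
    have : φ '' X = φ '' Set.univ := by rw [heq, Set.image_univ]; exact (Equiv.range_eq_univ φ.toEquiv).symm ▸ rfl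
    exact Set.image_injective.mpr φ.injective this ▸ rfl
  · rw [iso_boundary]
    exact iso_restricted φ hrc
  · rw [iso_boundary, Set.ncard_image_of_injective _ (Sym2.map.injective φ.injective)]
    exact hcard

lemma iso_superatom (φ : G ≃g G) (h : IsLambda2Superatom G X) :
    IsLambda2Superatom G (φ '' X) := by
  obtain ⟨hf, h2, hmin⟩ := h
  have hcard : (φ '' X).ncard = X.ncard := Set.ncard_image_of_injective _ φ.injective
  exact ⟨iso_fragment φ hf, by rw [hcard]; exact h2, fun Y hYf hY2 => hcard ▸ hmin Y hYf hY2⟩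

end Aux4

section Aux5
variable {V : Type*} [Fintype V] {G : SimpleGraph V} {X : Set V}

lemma iso_neighborSet (φ : G ≃g G) (x : V) :
    φ '' G.neighborSet x = G.neighborSet (φ x) := by
  ext z
  constructor
  · rintro ⟨y, hy, rfl⟩
    exact φ.map_adj_iff.mpr hy
  · intro hz
    refine ⟨φ.symm z, ?_, φ.apply_symm_apply z⟩
    have := φ.symm.map_adj_iff.mpr (hz : G.Adj (φ x) z)
    simpa using this

lemma no_triangle (hgirth : 3 < G.girth) {x y z : V} (hxy : G.Adj x y) (hyz : G.Adj y z)
    (hxz : G.Adj x z) : False := by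
  have hxyne : x ≠ y := hxy.ne
  have hyzne : y ≠ z := hyz.ne
  have hxzne : x ≠ z := hxz.ne
  let w : G.Walk x x := .cons hxy (.cons hyz (.cons hxz.symm .nil))
  have hcyc : w.IsCycle := by
    rw [Walk.isCycle_def]
    refine ⟨?_, by simp [w], ?_⟩
    · rw [Walk.isTrail_def]
      simp only [w, Walk.edges_cons, Walk.edges_nil]
      refine List.nodup_cons.mpr ⟨?_, List.nodup_cons.mpr ⟨?_, by simp⟩⟩
      · intro h
        rcases List.mem_cons.mp h with h | h
        · rw [Sym2.eq_iff] at h; tauto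
        · rcases List.mem_cons.mp h with h | h
          · rw [Sym2.eq_iff] at h; tauto
          · simp at h
      · intro h
        rcases List.mem_cons.mp h with h | h
        · rw [Sym2.eq_iff] at h; tauto
        · simp at h
    · simp [w, hxyne, hyzne, hxzne, Ne.symm hxyne, Ne.symm hyzne, Ne.symm hxzne]
  have htop : G.egirth ≠ ⊤ := by
    intro h
    have : G.girth = 0 := by simp [SimpleGraph.girth, h]
    omega
  have h4 : (4 : ℕ∞) ≤ G.egirth := by
    rw [← ENat.coe_toNat htop]
    exact_mod_cast (by omega : 4 ≤ G.girth)
  have := le_egirth.mp h4 x w hcyc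
  have hlen : w.length = 3 := by simp [w]
  rw [hlen] at this
  norm_num at this

lemma boundary_ncard_const {c : ℕ} (hc : ∀ x ∈ X, ((G.neighborSet x) \ X).ncard = c) :
    (edgeBoundary G X).ncard = X.ncard * c := by
  classical
  set FX : Finset V := Finset.univ.filter (· ∈ X) with hFX
  set nb : V → Finset V := fun x => Finset.univ.filter (fun y => G.Adj x y ∧ y ∉ X) with hnb
  set E : Finset (Sym2 V) := FX.biUnion (fun x => (nb x).image (fun y => s(x, y))) with hE
  have hXcard : X.ncard = FX.card := by
    rw [← Set.ncard_coe_finset]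
    congr 1
    ext v
    simp [hFX]
  have hbE : edgeBoundary G X = ↑E := by
    ext e
    simp only [hE, Finset.coe_biUnion, Set.mem_iUnion, Finset.mem_coe, Finset.mem_image,
      Finset.mem_filter, Finset.mem_univ, true_and, hFX, hnb]
    constructor
    · rintro ⟨he, x, hx, y, hy, rfl⟩
      exact ⟨x, hx, y, ⟨G.mem_edgeSet.mp (by exact he), hy⟩, rfl⟩
    · rintro ⟨x, hx, y, ⟨hadj, hy⟩, rfl⟩
      exact ⟨G.mem_edgeSet.mpr hadj, x, hx, y, hy, rfl⟩
  have hnbcard : ∀ x ∈ FX, ((nb x).image (fun y => s(x, y))).card = c := by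
    intro x hx
    rw [Finset.mem_filter] at hx
    have hinj : Set.InjOn (fun y => s(x, y)) ↑(nb x) := by
      intro y hy y' hy' hyy
      simp only [hnb, Finset.mem_coe, Finset.mem_filter, Finset.mem_univ, true_and] at hy hy'
      rw [Sym2.eq_iff] at hyy
      rcases hyy with ⟨-, h⟩ | ⟨h1, h2⟩
      · exact h
      · exact absurd hx.2 (h1 ▸ hy'.2)
    rw [Finset.card_image_of_injOn hinj]
    have : ((nb x : Finset V) : Set V) = G.neighborSet x \ X := by
      ext y
      rw [Finset.mem_coe]
      simp only [hnb, Finset.mem_filter, Finset.mem_univ, true_and, Set.mem_diff,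
        mem_neighborSet]
    rw [← hc x hx.2, ← this, Set.ncard_coe_finset]
  have hdisj : ∀ x ∈ FX, ∀ x' ∈ FX, x ≠ x' →
      Disjoint ((nb x).image (fun y => s(x, y))) ((nb x').image (fun y => s(x', y))) := by
    intro x hx x' hx' hne
    rw [Finset.mem_filter] at hx hx'
    rw [Finset.disjoint_left]
    rintro e he he'
    obtain ⟨y, hy, rfl⟩ := Finset.mem_image.mp he
    obtain ⟨y', hy', heq⟩ := Finset.mem_image.mp he'
    rw [Finset.mem_filter] at hy hy'
    rw [Sym2.eq_iff] at heq
    rcases heq with ⟨h1, -⟩ | ⟨h1, h2⟩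
    · exact hne h1.symm
    · exact hy'.2.2 (h2 ▸ hx.2)
  rw [hbE, Set.ncard_coe_finset, Finset.card_biUnion hdisj,
    Finset.sum_congr rfl hnbcard, Finset.sum_const, smul_eq_mul, hXcard]

end Aux5

/-- If a connected vertex-transitive odd graph with degree `k ≥ 4` and girth greater than 3
is not super restricted edge-connected, then it has two distinct `λ₂`-superatoms with
nonempty intersection. -/
theorem superatoms_intersect {V : Type*} [Fintype V] (G : SimpleGraph V) (k : ℕ)
    (hconn : G.Connected)
    (hvt : ∀ x y : V, ∃ φ : G ≃g G, φ x = y)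
    (hodd : Odd (Fintype.card V))
    (hreg : ∀ v : V, (G.neighborSet v).ncard = k)
    (hk : 4 ≤ k)
    (hgirth : 3 < G.girth)
    (hnot : ¬ SuperLambda2 G) :
    ∃ X Y : Set V, IsLambda2Superatom G X ∧ IsLambda2Superatom G Y ∧ X ≠ Y ∧
      (X ∩ Y).Nonempty := by
  classical
  by_contra hgoal
  push_neg at hgoal
  have key : ∀ S T : Set V, IsLambda2Superatom G S → IsLambda2Superatom G T →
      (S ∩ T).Nonempty → S = T := by
    intro S T hS hT hST
    by_contra hne
    exact Set.not_nonempty_iff_eq_empty.mpr (hgoal S T hS hT hne) hST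
  have hNE : Nonempty V := Fintype.card_pos_iff.mp (by rcases hodd with ⟨t, ht⟩; omega)
  obtain ⟨v0⟩ := hNE
  have hnbne : (G.neighborSet v0).Nonempty := by
    rw [← Set.ncard_pos (Set.toFinite _), hreg]
    omega
  obtain ⟨u0, hu0⟩ := hnbne
  have hedge : G.Adj v0 u0 := hu0
  have hk3 : 3 ≤ k := by omega
  have hcut := pair_restricted hreg hk3 hedge
  have hexF : ∃ F : Set (Sym2 V), IsRestrictedEdgeCut G F := ⟨_, hcut⟩
  have hl2le : lambda2 G ≤ 2 * k - 2 :=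
    (lambda2_le_of hcut).trans (pair_boundary_card hreg hedge)
  have hl2pos := lambda2_pos hconn hexF
  obtain ⟨X1, hfrag1, h31⟩ := exists_nontrivial_fragment hconn hodd hexF
  obtain ⟨X, hX⟩ := exists_superatom ⟨X1, hfrag1, by omega⟩
  set m := X.ncard with hm
  have hsize : ∀ S, IsLambda2Superatom G S → S.ncard = m := fun S hS =>
    le_antisymm (hS.2.2 X hX.1 hX.2.1) (hX.2.2 S hS.1 hS.2.1)
  have hXne : X.Nonempty := by
    by_contra hxe
    rw [Set.not_nonempty_iff_eq_empty] at hxe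
    have hb := hX.1.2.2
    have hbe : edgeBoundary G X = ∅ := by
      rw [hxe]
      ext e
      simp only [edgeBoundary, Set.mem_setOf_eq, Set.mem_empty_iff_false, iff_false, not_and]
      rintro - ⟨x, hx, -⟩
      exact hx.elim
    rw [hbe] at hb
    simp at hb
    omega
  obtain ⟨x0, hx0⟩ := hXne
  have hcover : ∀ v : V, ∃ S : Set V, IsLambda2Superatom G S ∧ v ∈ S := by
    intro v
    obtain ⟨φ, hφ⟩ := hvt x0 v
    exact ⟨φ '' X, iso_superatom φ hX, ⟨x0, hx0, hφ⟩⟩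
  choose A hA1 hA2 using hcover
  have hfib : ∀ v w : V, w ∈ A v ↔ A w = A v := by
    intro v w
    constructor
    · intro hw
      exact key _ _ (hA1 w) (hA1 v) ⟨w, hA2 w, hw⟩
    · intro h; exact h ▸ hA2 w
  have hodd_m : Odd m := by
    have hcard := Finset.card_eq_sum_card_fiberwise
      (f := A) (s := Finset.univ) (t := Finset.univ.image A)
      (fun x _ => Finset.mem_image_of_mem A (Finset.mem_univ x))
    rw [Finset.card_univ] at hcard
    have hterm : ∀ S ∈ Finset.univ.image A,
        (Finset.univ.filter (fun w => A w = S)).card = m := by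
      intro S hSmem
      obtain ⟨v, -, rfl⟩ := Finset.mem_image.mp hSmem
      have hset : ((Finset.univ.filter (fun w => A w = A v) : Finset V) : Set V) = A v := by
        ext w
        simp only [Finset.coe_filter, Finset.mem_univ, true_and, Set.mem_setOf_eq]
        exact (hfib v w).symm
      rw [← Set.ncard_coe_finset, hset, hsize _ (hA1 v)]
    have hVeq : Fintype.card V = (Finset.univ.image A).card * m := by
      rw [hcard, Finset.sum_congr rfl hterm, Finset.sum_const, smul_eq_mul]
    rw [hVeq] at hodd
    exact (Nat.odd_mul.mp hodd).2
  set d := (G.neighborSet x0 ∩ X).ncard with hd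
  have hdeg : ∀ x ∈ X, (G.neighborSet x ∩ X).ncard = d := by
    intro x hx
    obtain ⟨φ, hφ⟩ := hvt x0 x
    have hXfix : φ '' X = X := by
      apply key _ _ (iso_superatom φ hX) hX
      exact ⟨x, ⟨x0, hx0, hφ⟩, hx⟩
    have heq : G.neighborSet x ∩ X = φ '' (G.neighborSet x0 ∩ X) := by
      rw [Set.image_inter φ.injective, iso_neighborSet, hφ, hXfix]
    rw [heq, Set.ncard_image_of_injective _ φ.injective]
  have hdk : d ≤ k := by
    rw [hd, ← hreg x0]
    exact Set.ncard_le_ncard Set.inter_subset_left (Set.toFinite _)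
  have houtdeg : ∀ x ∈ X, ((G.neighborSet x) \ X).ncard = k - d := by
    intro x hx
    have hsplit := Set.ncard_inter_add_ncard_diff_eq_ncard (G.neighborSet x) X (Set.toFinite _)
    rw [hdeg x hx, hreg x] at hsplit
    omega
  have hl2 : lambda2 G = m * (k - d) := (hX.1.2.2).symm.trans (boundary_ncard_const houtdeg)
  have hm0 : m ≠ 0 := by
    have hpos := (Set.ncard_pos (Set.toFinite X)).mpr ⟨x0, hx0⟩
    omega
  have hm1 : m ≠ 1 := by
    intro h1
    obtain ⟨a, ha⟩ := Set.ncard_eq_one.mp (hm ▸ h1)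
    refine no_isolated_in_fragment hX.1 hx0 ?_
    ext z
    simp only [Set.mem_inter_iff, mem_neighborSet, Set.mem_empty_iff_false, iff_false, not_and]
    intro hadj hzX
    rw [ha, Set.mem_singleton_iff] at hzX
    have hx0a : x0 = a := by rw [ha, Set.mem_singleton_iff] at hx0; exact hx0
    exact G.irrefl (hzX ▸ hx0a ▸ hadj)
  have hm3 : 3 ≤ m := by
    have h2 := hX.2.1
    omega
  have hd1 : 1 ≤ d := by
    by_contra h
    push_neg at h
    have h0 : G.neighborSet x0 ∩ X = ∅ :=
      (Set.ncard_eq_zero (Set.toFinite _)).mp (by omega)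
    exact no_isolated_in_fragment hX.1 hx0 h0
  have h2d : 2 * d ≤ m := by
    obtain ⟨y0, hy0⟩ : (G.neighborSet x0 ∩ X).Nonempty := by
      rw [← Set.ncard_pos (Set.toFinite _)]
      omega
    have hy0X : y0 ∈ X := hy0.2
    have hxy : G.Adj x0 y0 := hy0.1
    have hdisj : Disjoint (G.neighborSet x0 ∩ X) (G.neighborSet y0 ∩ X) := by
      rw [Set.disjoint_left]
      rintro z ⟨hz1, -⟩ ⟨hz2, -⟩
      exact no_triangle hgirth hxy hz2 hz1
    have hsub : (G.neighborSet x0 ∩ X) ∪ (G.neighborSet y0 ∩ X) ⊆ X :=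
      Set.union_subset Set.inter_subset_right Set.inter_subset_right
    calc 2 * d = d + d := two_mul d
      _ = (G.neighborSet x0 ∩ X).ncard + (G.neighborSet y0 ∩ X).ncard := by
          rw [← hd, hdeg y0 hy0X]
      _ = ((G.neighborSet x0 ∩ X) ∪ (G.neighborSet y0 ∩ X)).ncard :=
          (Set.ncard_union_eq hdisj (Set.toFinite _) (Set.toFinite _)).symm
      _ ≤ m := Set.ncard_le_ncard hsub (Set.toFinite _)
  have hdk' : d < k := by
    by_contra h
    push_neg at h
    have hdek : d = k := le_antisymm hdk h
    rw [hdek, Nat.sub_self, mul_zero] at hl2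
    omega
  by_cases hd_1 : d = 1
  · rw [hd_1] at hl2
    have h1 : 3 * (k - 1) ≤ m * (k - 1) := Nat.mul_le_mul_right _ hm3
    rw [← hl2] at h1
    omega
  · by_cases hd_top : d = k - 1
    · rw [hd_top] at hl2 h2d
      have hk1 : k - (k - 1) = 1 := by omega
      rw [hk1, mul_one] at hl2
      rw [Nat.odd_iff] at hodd_m
      omega
    · have hd2 : 2 ≤ d := by omega
      set c := k - d with hc
      have hcd : d + c = k := by omega
      have hc2 : 2 ≤ c := by omega
      have hmul : 2 * d * c ≤ m * c := Nat.mul_le_mul_right _ h2d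
      rw [← hl2] at hmul
      have hdc : 2 * d + 2 * c ≤ d * c + 4 := by nlinarith
      have hle2 : lambda2 G + 2 ≤ 2 * k := by omega
      nlinarith
end

section
/- Let G be a simple vertex-transitive graph of odd order that contains a quadrangle (4-cycle). Then every vertex of G is contained in the same number m of quadrangles, and m is divisible by 4. -/
open SimpleGraph

lemma quad_map {V : Type*} {G : SimpleGraph V} (φ : G ≃g G) {Q : Set (Sym2 V)}
    (h : IsQuadrangle G Q) : IsQuadrangle G (Sym2.map φ '' Q) := by
  obtain ⟨a, b, c, d, hn, h1, h2, h3, h4, hQ⟩ := h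
  refine ⟨φ a, φ b, φ c, φ d, ?_, φ.map_rel_iff.mpr h1, φ.map_rel_iff.mpr h2,
    φ.map_rel_iff.mpr h3, φ.map_rel_iff.mpr h4, ?_⟩
  · have : [φ a, φ b, φ c, φ d] = [a, b, c, d].map φ := by simp
    rw [this]
    exact hn.map φ.injective
  · rw [hQ]
    simp [Set.image_insert_eq, Sym2.map_pair_eq]

lemma touch_set_eq {V : Type*} {G : SimpleGraph V} (φ : G ≃g G) (v : V) :
    {Q : Set (Sym2 V) | IsQuadrangle G Q ∧ ∃ e ∈ Q, φ v ∈ e} =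
      (fun Q => Sym2.map φ '' Q) '' {Q : Set (Sym2 V) | IsQuadrangle G Q ∧ ∃ e ∈ Q, v ∈ e} := by
  ext Q'
  constructor
  · rintro ⟨hq, e', he', hv⟩
    refine ⟨Sym2.map (φ.symm : G ≃g G) '' Q', ⟨quad_map φ.symm hq, ?_⟩, ?_⟩
    · refine ⟨Sym2.map (φ.symm : G ≃g G) e', Set.mem_image_of_mem _ he', ?_⟩
      have : (φ.symm : G ≃g G) (φ v) ∈ Sym2.map (φ.symm : G ≃g G) e' :=
        Sym2.mem_map.mpr ⟨φ v, hv, rfl⟩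
      simpa using this
    · show Sym2.map φ '' (Sym2.map (φ.symm : G ≃g G) '' Q') = Q'
      rw [Set.image_image]
      have h1 : ∀ e : Sym2 V, Sym2.map φ (Sym2.map (φ.symm : G ≃g G) e) = e := by
        intro e
        rw [Sym2.map_map]
        have h2 : (⇑φ ∘ ⇑(φ.symm : G ≃g G)) = id := by funext x; simp
        rw [h2, Sym2.map_id]; rfl
      simp only [h1, Set.image_id']
  · rintro ⟨Q, ⟨hq, e, he, hv⟩, rfl⟩
    exact ⟨quad_map φ hq, Sym2.map φ e, Set.mem_image_of_mem _ he,
      Sym2.mem_map.mpr ⟨v, hv, rfl⟩⟩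

/-- In a vertex-transitive odd graph containing a quadrangle, every vertex lies in the same
number `m` of quadrangles, and `4 ∣ m`. -/
theorem quadrangles_per_vertex {V : Type*} [Fintype V] (G : SimpleGraph V)
    (hvt : ∀ x y : V, ∃ φ : G ≃g G, φ x = y)
    (hodd : Odd (Fintype.card V))
    (hquad : ∃ Q : Set (Sym2 V), IsQuadrangle G Q) :
    ∃ m : ℕ,
      (∀ v : V,
        {Q : Set (Sym2 V) | IsQuadrangle G Q ∧ ∃ e ∈ Q, v ∈ e}.ncard = m) ∧
      4 ∣ m := by
  classical
  have hpos : 0 < Fintype.card V := hodd.pos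
  have : Nonempty V := Fintype.card_pos_iff.mp hpos
  obtain ⟨v₀⟩ := this
  set m := {Q : Set (Sym2 V) | IsQuadrangle G Q ∧ ∃ e ∈ Q, v₀ ∈ e}.ncard with hm
  have hconst : ∀ v : V,
      {Q : Set (Sym2 V) | IsQuadrangle G Q ∧ ∃ e ∈ Q, v ∈ e}.ncard = m := by
    intro v
    obtain ⟨φ, hφ⟩ := hvt v₀ v
    rw [hm, ← hφ, touch_set_eq φ v₀]
    exact Set.ncard_image_of_injective _
      (Set.image_injective.mpr (Sym2.map.injective φ.injective))
  refine ⟨m, hconst, ?_⟩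
  -- double counting
  haveI : Fintype (Set (Sym2 V)) := Fintype.ofFinite _
  set QF : Finset (Set (Sym2 V)) := Finset.univ.filter (IsQuadrangle G) with hQF
  have hcard : ∀ v : V,
      {Q : Set (Sym2 V) | IsQuadrangle G Q ∧ ∃ e ∈ Q, v ∈ e}.ncard =
        (QF.filter (fun Q => ∃ e ∈ Q, v ∈ e)).card := by
    intro v
    have hset : {Q : Set (Sym2 V) | IsQuadrangle G Q ∧ ∃ e ∈ Q, v ∈ e} =
        ↑(QF.filter (fun Q => ∃ e ∈ Q, v ∈ e)) := by
      ext Q; simp [hQF, and_comm]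
    rw [hset, Set.ncard_coe_finset]
  have key : Fintype.card V * m = 4 * QF.card := by
    calc Fintype.card V * m = ∑ _v : V, m := by
          rw [Finset.sum_const, Finset.card_univ, smul_eq_mul]
      _ = ∑ v : V, (QF.filter (fun Q => ∃ e ∈ Q, v ∈ e)).card := by
          refine Finset.sum_congr rfl fun v _ => ?_
          rw [← hcard v, hconst v]
      _ = ∑ v : V, ∑ Q ∈ QF, (if ∃ e ∈ Q, v ∈ e then 1 else 0) := by
          refine Finset.sum_congr rfl fun v _ => ?_
          rw [Finset.card_filter]
      _ = ∑ Q ∈ QF, ∑ v : V, (if ∃ e ∈ Q, v ∈ e then 1 else 0) := Finset.sum_comm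
      _ = ∑ Q ∈ QF, (Finset.univ.filter (fun v => ∃ e ∈ Q, v ∈ e)).card := by
          refine Finset.sum_congr rfl fun Q _ => ?_
          rw [Finset.card_filter]
      _ = ∑ _Q ∈ QF, 4 := by
          refine Finset.sum_congr rfl fun Q hQ => ?_
          have hq : IsQuadrangle G Q := by
            simp only [hQF, Finset.mem_filter] at hQ
            exact hQ.2
          obtain ⟨a, b, c, d, hn, h1, h2, h3, h4, hQeq⟩ := hq
          have hset : Finset.univ.filter (fun v => ∃ e ∈ Q, v ∈ e) =
              ({a, b, c, d} : Finset V) := by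
            ext v
            simp only [Finset.mem_filter, Finset.mem_univ, true_and, hQeq,
              Finset.mem_insert, Finset.mem_singleton]
            constructor
            · rintro ⟨e, he, hv⟩
              simp only [Set.mem_insert_iff, Set.mem_singleton_iff] at he
              rcases he with rfl | rfl | rfl | rfl <;>
                rcases Sym2.mem_iff.mp hv with rfl | rfl <;> tauto
            · rintro (h | h | h | h)
              · exact ⟨s(a, b), by simp, by rw [h]; exact Sym2.mem_mk_left _ _⟩
              · exact ⟨s(b, c), by simp, by rw [h]; exact Sym2.mem_mk_left _ _⟩
              · exact ⟨s(c, d), by simp, by rw [h]; exact Sym2.mem_mk_left _ _⟩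
              · exact ⟨s(d, a), by simp, by rw [h]; exact Sym2.mem_mk_left _ _⟩
          rw [hset]
          have : ({a, b, c, d} : Finset V) = [a, b, c, d].toFinset := by simp
          rw [this, List.toFinset_card_of_nodup hn]
          rfl
      _ = 4 * QF.card := by rw [Finset.sum_const, smul_eq_mul, Nat.mul_comm]
  have hcop : Nat.Coprime 4 (Fintype.card V) := by
    have h2 : Nat.Coprime 2 (Fintype.card V) := Nat.coprime_two_left.mpr hodd
    simpa using h2.pow_left 2
  exact hcop.dvd_of_dvd_mul_left ⟨QF.card, key⟩
end
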